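/- arXiv:1204.4025 — 9 statements merged into one kernel-verified Lean document; each statement's English description precedes it below -/
import Mathlib

section
/- Let n ≥ 2 be an integer, a > 0 and c ≥ 0 with c ≠ 1/i for every integer i with 1 ≤ i ≤ n−1. Define β_j = (n−j)(1+jc) for 0 ≤ j ≤ n−1, and define coefficients recursively by α_{1,0} = n, and for 1 ≤ k ≤ n−1: α_{k+1,j} = α_{k,j} β_k/(β_k − β_j) for 0 ≤ j ≤ k−1 and α_{k+1,k} = −Σ_{u=0}^{k−1} α_{k,u} β_k/(β_k − β_u). Let X_0, …, X_{n−1} be independent random variables with X_i exponentially distributed with rate a(1+ic)(n−i), and set τ^k = X_0 + … + X_{k−1}. Then for every 1 ≤ k ≤ n, the law of τ^k has density f_{τ^k}(t) = Σ_{j=0}^{k−1} α_{k,j} a e^{−β_j a t} with respect to Lebesgue measure on (0,∞). -/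
open MeasureTheory ProbabilityTheory Real Set
open scoped ProbabilityTheory ENNReal

/-- Convolution of two densities supported on `(0, ∞)`. -/
lemma conv_density_Ioi (f g : ℝ → ℝ≥0∞) (hf : Measurable f) (hg : Measurable g) :
    Measure.map (fun p : ℝ × ℝ => p.1 + p.2)
      (((volume.restrict (Ioi (0:ℝ))).withDensity f).prod
        ((volume.restrict (Ioi (0:ℝ))).withDensity g))
    = (volume.restrict (Ioi (0:ℝ))).withDensity
        (fun t => ∫⁻ x in Ioo 0 t, f x * g (t - x)) := by
  set μ := (volume.restrict (Ioi (0:ℝ))).withDensity f with hμ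
  set ν := (volume.restrict (Ioi (0:ℝ))).withDensity g with hν
  set h : ℝ → ℝ≥0∞ := fun t => ∫⁻ x in Ioo 0 t, f x * g (t - x) with hh
  ext s hs
  have hT : MeasurableSet ((fun p : ℝ × ℝ => p.1 + p.2) ⁻¹' s) :=
    (measurable_fst.add measurable_snd) hs
  rw [Measure.map_apply (f := fun p : ℝ × ℝ => p.1 + p.2) (measurable_fst.add measurable_snd) hs, Measure.prod_apply hT]
  set F : ℝ → ℝ≥0∞ := fun x => ∫⁻ y, ((Ioi (0:ℝ)).indicator g y * s.indicator 1 (x + y)) with hF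
  have hFmeas : Measurable F := by
    apply Measurable.lintegral_prod_right
      (f := fun x y => (Ioi (0:ℝ)).indicator g y * s.indicator 1 (x + y))
    rw [Function.uncurry_def]
    exact ((hg.indicator measurableSet_Ioi).comp measurable_snd).mul
      ((measurable_one.indicator hs).comp (measurable_fst.add measurable_snd))
  have hA : ∀ x : ℝ, ν (Prod.mk x ⁻¹' ((fun p : ℝ × ℝ => p.1 + p.2) ⁻¹' s)) = F x := by
    intro x
    have hpre : Prod.mk x ⁻¹' ((fun p : ℝ × ℝ => p.1 + p.2) ⁻¹' s) = (fun y => x + y) ⁻¹' s := rfl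
    have hAm : MeasurableSet ((fun y : ℝ => x + y) ⁻¹' s) := (measurable_const.add measurable_id) hs
    rw [hpre, hν, withDensity_apply _ hAm, Measure.restrict_restrict hAm,
      ← lintegral_indicator (hAm.inter measurableSet_Ioi)]
    refine lintegral_congr fun y => ?_
    by_cases hy : y ∈ Ioi (0:ℝ) <;> by_cases hxy : x + y ∈ s <;>
      simp [Set.indicator, hy, hxy, Set.mem_preimage]
  simp_rw [hA]
  set J : ℝ → ℝ → ℝ≥0∞ := fun x t =>
    (Ioi (0:ℝ)).indicator f x * ((Ioi (0:ℝ)).indicator g (t - x) * s.indicator 1 t) with hJ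
  have hJmeas : Measurable (Function.uncurry J) := by
    rw [Function.uncurry_def]
    exact ((hf.indicator measurableSet_Ioi).comp measurable_fst).mul
      ((((hg.indicator measurableSet_Ioi).comp (measurable_snd.sub measurable_fst))).mul
        ((measurable_one.indicator hs).comp measurable_snd))
  calc ∫⁻ x, F x ∂μ
      = ∫⁻ x, f x * F x ∂(volume.restrict (Ioi (0:ℝ))) := by
        rw [hμ, lintegral_withDensity_eq_lintegral_mul _ hf hFmeas]; rfl
    _ = ∫⁻ x, (Ioi (0:ℝ)).indicator (fun x => f x * F x) x ∂volume := by
        rw [lintegral_indicator measurableSet_Ioi]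
    _ = ∫⁻ x, ∫⁻ y, J x (x + y) ∂volume ∂volume := by
        refine lintegral_congr fun x => ?_
        by_cases hx : x ∈ Ioi (0:ℝ)
        · rw [Set.indicator_of_mem hx]
          have hm : Measurable fun y : ℝ => (Ioi (0:ℝ)).indicator g y * s.indicator 1 (x + y) :=
            (hg.indicator measurableSet_Ioi).mul
              ((measurable_one.indicator hs).comp (measurable_const.add measurable_id))
          have heq : ∀ y : ℝ, J x (x + y)
              = f x * ((Ioi (0:ℝ)).indicator g y * s.indicator 1 (x + y)) := by
            intro y
            simp [hJ, Set.indicator_of_mem hx, add_sub_cancel_left]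
          calc f x * F x
              = ∫⁻ y, f x * ((Ioi (0:ℝ)).indicator g y * s.indicator 1 (x + y)) :=
                (lintegral_const_mul (f x) hm).symm
            _ = ∫⁻ y, J x (x + y) := (lintegral_congr heq).symm
        · simp [hJ, Set.indicator_of_notMem hx]
    _ = ∫⁻ x, ∫⁻ t, J x t ∂volume ∂volume := by
        exact lintegral_congr fun x => lintegral_add_left_eq_self (J x) x
    _ = ∫⁻ t, ∫⁻ x, J x t ∂volume ∂volume := lintegral_lintegral_swap hJmeas.aemeasurable
    _ = ∫⁻ t, s.indicator h t ∂volume := by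
        refine lintegral_congr fun t => ?_
        have hpt : ∀ x, J x t
            = s.indicator 1 t * (Ioo (0:ℝ) t).indicator (fun x => f x * g (t - x)) x := by
          intro x
          simp only [hJ, Set.indicator_apply, Set.mem_Ioi, Set.mem_Ioo, sub_pos]
          by_cases hx : 0 < x <;> by_cases hxt : x < t <;> by_cases hts : t ∈ s <;>
            simp [hx, hxt, hts]
        have hm2 : Measurable fun x : ℝ => f x * g (t - x) :=
          hf.mul (hg.comp (measurable_const.sub measurable_id))
        rw [lintegral_congr hpt, lintegral_const_mul _ (hm2.indicator measurableSet_Ioo),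
          lintegral_indicator measurableSet_Ioo]
        by_cases hts : t ∈ s <;> simp [hts, hh]
    _ = ∫⁻ t in s, h t ∂volume := lintegral_indicator hs _
    _ = ((volume.restrict (Ioi (0:ℝ))).withDensity h) s := by
        rw [withDensity_apply _ hs, Measure.restrict_restrict hs]
        have hzero : ∀ t : ℝ, t ∉ Ioi (0:ℝ) → h t = 0 := by
          intro t ht
          have he : Ioo (0:ℝ) t = ∅ := Ioo_eq_empty (by simpa [Set.mem_Ioi] using ht)
          simp [hh, he]
        have hid : ∀ t, h t = (Ioi (0:ℝ)).indicator h t := by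
          intro t
          by_cases ht : t ∈ Ioi (0:ℝ)
          · rw [Set.indicator_of_mem ht]
          · rw [Set.indicator_of_notMem ht]; exact hzero t ht
        calc ∫⁻ t in s, h t ∂volume
            = ∫⁻ t in s, (Ioi (0:ℝ)).indicator h t ∂volume := lintegral_congr hid
          _ = ∫⁻ t in Ioi 0, h t ∂(volume.restrict s) := lintegral_indicator measurableSet_Ioi _
          _ = ∫⁻ t in s ∩ Ioi 0, h t ∂volume := by
              rw [Measure.restrict_restrict measurableSet_Ioi, Set.inter_comm]

lemma integral_exp_mul_aux {m : ℝ} (hm : m ≠ 0) (t : ℝ) :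
    ∫ s in (0:ℝ)..t, rexp (m * s) = (rexp (m * t) - 1) / m := by
  have h : ∀ s : ℝ, rexp (m * s) = rexp (s * m) := fun s => by rw [mul_comm]
  simp_rw [h]
  rw [intervalIntegral.integral_comp_mul_right rexp hm, integral_exp]
  simp [mul_comm, smul_eq_mul]
  ring

lemma sum_exp_conv {a : ℝ} (ha : 0 < a) (k : ℕ) (β : ℕ → ℝ) (A : ℕ → ℝ)
    (hne : ∀ j < k, β k - β j ≠ 0) (t : ℝ) :
    ∫ s in (0:ℝ)..t,
        (∑ j ∈ Finset.range k, A j * a * rexp (-(β j * a * s)))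
          * (β k * a * rexp (-(β k * a * (t - s))))
      = (∑ j ∈ Finset.range k, (A j * β k / (β k - β j)) * a * rexp (-(β j * a * t)))
        + (-∑ j ∈ Finset.range k, A j * β k / (β k - β j)) * a * rexp (-(β k * a * t)) := by
  simp_rw [Finset.sum_mul]
  rw [intervalIntegral.integral_finset_sum]
  · have hterm : ∀ j ∈ Finset.range k,
        (∫ s in (0:ℝ)..t, A j * a * rexp (-(β j * a * s)) * (β k * a * rexp (-(β k * a * (t - s)))))
          = (A j * β k / (β k - β j)) * a
              * (rexp (-(β j * a * t)) - rexp (-(β k * a * t))) := by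
      intro j hj
      have hj' : j < k := Finset.mem_range.mp hj
      set m := (β k - β j) * a with hm
      have hm0 : m ≠ 0 := mul_ne_zero (hne j hj') ha.ne'
      have hint : ∀ s : ℝ, A j * a * rexp (-(β j * a * s)) * (β k * a * rexp (-(β k * a * (t - s))))
          = (A j * a * (β k * a) * rexp (-(β k * a * t))) * rexp (m * s) := by
        intro s
        have h1 : -(β j * a * s) + -(β k * a * (t - s)) = -(β k * a * t) + m * s := by
          rw [hm]; ring
        calc A j * a * rexp (-(β j * a * s)) * (β k * a * rexp (-(β k * a * (t - s))))
            = (A j * a * (β k * a)) * rexp (-(β j * a * s) + -(β k * a * (t - s))) := by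
              rw [Real.exp_add]; ring
          _ = (A j * a * (β k * a) * rexp (-(β k * a * t))) * rexp (m * s) := by
              rw [h1, Real.exp_add]; ring
      simp_rw [hint]
      rw [intervalIntegral.integral_const_mul, integral_exp_mul_aux hm0 t]
      have h2 : rexp (-(β k * a * t)) * rexp (m * t) = rexp (-(β j * a * t)) := by
        rw [← Real.exp_add]; congr 1; rw [hm]; ring
      have h3 : rexp (-(β k * a * t)) * (rexp (m * t) - 1)
          = rexp (-(β j * a * t)) - rexp (-(β k * a * t)) := by
        rw [mul_sub, h2, mul_one]
      calc A j * a * (β k * a) * rexp (-(β k * a * t)) * ((rexp (m * t) - 1) / m)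
          = (A j * a * (β k * a) / m) * (rexp (-(β k * a * t)) * (rexp (m * t) - 1)) := by
            ring
        _ = (A j * a * (β k * a) / m) * (rexp (-(β j * a * t)) - rexp (-(β k * a * t))) := by
            rw [h3]
        _ = A j * β k / (β k - β j) * a * (rexp (-(β j * a * t)) - rexp (-(β k * a * t))) := by
            rw [hm]
            have hbk : β k - β j ≠ 0 := hne j hj'
            field_simp
    rw [Finset.sum_congr rfl hterm]
    simp_rw [mul_sub]
    rw [Finset.sum_sub_distrib, sub_eq_add_neg]
    congr 1
    rw [neg_mul, neg_mul, Finset.sum_mul, Finset.sum_mul, neg_inj]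
  · intro j hj
    apply Continuous.intervalIntegrable
    continuity

lemma expMeasure_eq_withDensity {r : ℝ} (hr : 0 < r) :
    expMeasure r
      = (volume.restrict (Ioi (0:ℝ))).withDensity
          (fun t => ENNReal.ofReal (r * rexp (-(r * t)))) := by
  have h1 : expMeasure r = volume.withDensity (exponentialPDF r) := rfl
  rw [h1, ← withDensity_indicator measurableSet_Ioi]
  apply withDensity_congr_ae
  have hsub : {x : ℝ | exponentialPDF r x
      ≠ (Ioi (0:ℝ)).indicator (fun t => ENNReal.ofReal (r * rexp (-(r * t)))) x} ⊆ {0} := by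
    intro x hx
    simp only [mem_setOf_eq] at hx
    rcases lt_trichotomy x 0 with h | h | h
    · exact absurd (by rw [exponentialPDF_of_neg h,
        Set.indicator_of_notMem (by simp [Set.mem_Ioi]; linarith)]) hx
    · simp [h]
    · exact absurd (by rw [exponentialPDF_of_nonneg h.le,
        Set.indicator_of_mem (Set.mem_Ioi.mpr h)]) hx
  rw [Filter.EventuallyEq, ae_iff]
  exact measure_mono_null hsub (measure_singleton 0)

lemma lintegral_ofReal_conv (f g : ℝ → ℝ) (hfc : Continuous f) (hgc : Continuous g)
    (hf0 : ∀ x, 0 ≤ x → 0 ≤ f x) (hg0 : ∀ x, 0 ≤ g x) {t : ℝ} (ht : 0 < t) :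
    ∫⁻ x in Ioo (0:ℝ) t, ENNReal.ofReal (f x) * ENNReal.ofReal (g (t - x))
      = ENNReal.ofReal (∫ x in (0:ℝ)..t, f x * g (t - x)) := by
  have h1 : ∀ x ∈ Ioo (0:ℝ) t, ENNReal.ofReal (f x) * ENNReal.ofReal (g (t - x))
      = ENNReal.ofReal (f x * g (t - x)) :=
    fun x hx => (ENNReal.ofReal_mul (hf0 x hx.1.le)).symm
  rw [setLIntegral_congr_fun measurableSet_Ioo (fun x hx => h1 x hx)]
  have hcont : Continuous fun x => f x * g (t - x) :=
    hfc.mul (hgc.comp (continuous_const.sub continuous_id))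
  have hint : IntegrableOn (fun x => f x * g (t - x)) (Ioo 0 t) volume :=
    (hcont.integrableOn_Icc).mono_set Ioo_subset_Icc_self
  rw [← ofReal_integral_eq_lintegral_ofReal hint
    ((ae_restrict_mem measurableSet_Ioo).mono fun x hx =>
      mul_nonneg (hf0 x hx.1.le) (hg0 _))]
  rw [intervalIntegral.integral_of_le ht.le, integral_Ioc_eq_integral_Ioo]

/-- Closed-form density of the `k`-th default time in the homogeneous contagion model:
with `β j = (n-j)(1+jc)` and `α` defined by the stated recursion, the law of
`τ^k = X 0 + ⋯ + X (k-1)` (a sum of independent exponentials with rates `a(1+ic)(n-i)`)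
has density `t ↦ Σ_{j<k} α k j · a · e^{-β j a t}` w.r.t. Lebesgue measure on `(0,∞)`. -/
theorem kth_default_time_density_closed_form
    {Ω : Type*} [MeasureSpace Ω] [IsProbabilityMeasure (ℙ : Measure Ω)]
    (n : ℕ) (hn : 2 ≤ n) (a c : ℝ) (ha : 0 < a) (hc : 0 ≤ c)
    (hcne : ∀ i : ℕ, 1 ≤ i → i ≤ n - 1 → c ≠ 1 / (i : ℝ))
    (β : ℕ → ℝ) (hβ : ∀ j ≤ n - 1, β j = ((n : ℝ) - (j : ℝ)) * (1 + (j : ℝ) * c))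
    (α : ℕ → ℕ → ℝ) (hα1 : α 1 0 = n)
    (hαrec : ∀ k, 1 ≤ k → k ≤ n - 1 →
      (∀ j ≤ k - 1, α (k + 1) j = α k j * β k / (β k - β j)) ∧
      α (k + 1) k = -∑ u ∈ Finset.range k, α k u * β k / (β k - β u))
    (X : Fin n → Ω → ℝ) (hXmeas : ∀ i, Measurable (X i))
    (hindep : iIndepFun X ℙ)
    (hXdist : ∀ i : Fin n,
      Measure.map (X i) ℙ = expMeasure (a * (1 + (i : ℝ) * c) * ((n : ℝ) - (i : ℝ)))) :
    ∀ k, 1 ≤ k → k ≤ n →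
      Measure.map
          (fun ω => ∑ i ∈ Finset.univ.filter (fun i : Fin n => (i : ℕ) < k), X i ω) ℙ =
        (volume.restrict (Ioi (0 : ℝ))).withDensity
          (fun t => ENNReal.ofReal
            (∑ j ∈ Finset.range k, α k j * a * Real.exp (-(β j * a * t)))) := by
  have hβpos : ∀ j, j ≤ n - 1 → 0 < β j := by
    intro j hj
    rw [hβ j hj]
    have hjn : j < n := by omega
    have hj' : (j : ℝ) < n := by exact_mod_cast hjn
    have h1 : 0 < (n : ℝ) - j := by linarith
    have h2 : 0 < 1 + (j : ℝ) * c := by positivity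
    positivity
  have hβne : ∀ k j, 1 ≤ k → k ≤ n - 1 → j < k → β k - β j ≠ 0 := by
    intro k j hk1 hkn hjk
    rw [hβ k hkn, hβ j (by omega)]
    have key : ((n:ℝ) - k) * (1 + (k:ℝ) * c) - ((n:ℝ) - j) * (1 + (j:ℝ) * c)
        = ((k:ℝ) - j) * (c * ((n:ℝ) - k - j) - 1) := by ring
    rw [key]
    apply mul_ne_zero
    · have : (j:ℝ) < k := by exact_mod_cast hjk
      exact sub_ne_zero.mpr (by linarith)
    · by_cases hkj : k + j < n
      · have h1 : k ≤ n := by omega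
        have h3 : j ≤ n - k := by omega
        have hi : ((n - k - j : ℕ) : ℝ) = (n : ℝ) - k - j := by
          push_cast [Nat.cast_sub h3, Nat.cast_sub h1]
          ring
        intro hcon
        apply hcne (n - k - j) (by omega) (by omega)
        have hi0 : ((n - k - j : ℕ) : ℝ) ≠ 0 := by
          rw [hi]
          have : (k:ℝ) + j < n := by exact_mod_cast hkj
          linarith
        rw [eq_div_iff hi0, hi]
        linarith [hcon]
      · have hle : (n : ℝ) ≤ (k:ℝ) + j := by exact_mod_cast (by omega : n ≤ k + j)
        have h2 : c * ((n:ℝ) - k - j) ≤ 0 :=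
          mul_nonpos_of_nonneg_of_nonpos hc (by linarith)
        exact ne_of_lt (by linarith)
  have main : ∀ k, 1 ≤ k → k ≤ n →
      (∀ t : ℝ, 0 ≤ t → 0 ≤ ∑ j ∈ Finset.range k, α k j * a * rexp (-(β j * a * t))) ∧
      Measure.map
          (fun ω => ∑ i ∈ Finset.univ.filter (fun i : Fin n => (i : ℕ) < k), X i ω) ℙ =
        (volume.restrict (Ioi (0 : ℝ))).withDensity
          (fun t => ENNReal.ofReal
            (∑ j ∈ Finset.range k, α k j * a * Real.exp (-(β j * a * t)))) := by
    intro k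
    induction k with
    | zero => exact fun h => absurd h (by omega)
    | succ m ih =>
      intro _ hm1
      by_cases hm : m = 0
      · -- base case k = 1
        subst hm
        have h0 : (0:ℕ) < n := by omega
        have hβ0 : β 0 = (n : ℝ) := by
          rw [hβ 0 (by omega)]; push_cast; ring
        have hβ0pos : (0:ℝ) < β 0 := hβpos 0 (by omega)
        constructor
        · intro t ht
          rw [Finset.sum_range_one, hα1]
          have hn0 : (0:ℝ) ≤ (n:ℝ) := by positivity
          positivity
        · have hset : Finset.univ.filter (fun i : Fin n => (i : ℕ) < 1)
              = {(⟨0, h0⟩ : Fin n)} := by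
            ext i
            simp [Fin.ext_iff, Nat.lt_one_iff]
          simp only [hset, Finset.sum_singleton]
          rw [hXdist ⟨0, h0⟩]
          have hrate : a * (1 + (((⟨0, h0⟩ : Fin n) : ℕ) : ℝ) * c)
              * ((n : ℝ) - (((⟨0, h0⟩ : Fin n) : ℕ) : ℝ)) = β 0 * a := by
            simp [hβ0]; ring
          rw [show expMeasure (a * (1 + (((⟨0, h0⟩ : Fin n) : ℕ) : ℝ) * c)
              * ((n : ℝ) - (((⟨0, h0⟩ : Fin n) : ℕ) : ℝ))) = expMeasure (β 0 * a) by
            rw [hrate]]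
          rw [expMeasure_eq_withDensity (by positivity)]
          congr 1
          funext t
          congr 1
          rw [Finset.sum_range_one, hα1, hβ0]
      · -- inductive step
        have hm1' : 1 ≤ m := Nat.one_le_iff_ne_zero.mpr hm
        have hmn : m ≤ n - 1 := by omega
        have hmn' : m < n := by omega
        obtain ⟨ihnn, ihmap⟩ := ih hm1' (by omega)
        have hne' : ∀ j < m, β m - β j ≠ 0 := fun j hj => hβne m j hm1' hmn hj
        have hβm : 0 < β m := hβpos m hmn
        set g0 : ℝ → ℝ := fun y => β m * a * rexp (-(β m * a * y)) with hg0
        set Dm : ℝ → ℝ := fun t => ∑ j ∈ Finset.range m, α m j * a * rexp (-(β j * a * t))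
          with hDm
        have hexp : ∀ b : ℝ, Continuous fun t : ℝ => rexp (-(b * t)) := fun b =>
          Real.continuous_exp.comp ((continuous_const.mul continuous_id).neg)
        have hDmcont : Continuous Dm := by
          rw [hDm]
          apply continuous_finset_sum
          intro j _
          exact continuous_const.mul (by simpa [mul_assoc] using hexp (β j * a))
        have hg0cont : Continuous g0 := by
          rw [hg0]
          exact continuous_const.mul (by simpa [mul_assoc] using hexp (β m * a))
        have hg0nn : ∀ y : ℝ, 0 ≤ g0 y := by
          intro y
          simp only [hg0]
          positivity
        have hdens : ∀ t : ℝ,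
            (∑ j ∈ Finset.range m, (α m j * β m / (β m - β j)) * a * rexp (-(β j * a * t)))
              + (-∑ j ∈ Finset.range m, α m j * β m / (β m - β j)) * a
                  * rexp (-(β m * a * t))
            = ∑ j ∈ Finset.range (m + 1), α (m + 1) j * a * rexp (-(β j * a * t)) := by
          intro t
          rw [Finset.sum_range_succ, ((hαrec m hm1' hmn).2)]
          congr 1
          refine Finset.sum_congr rfl fun j hj => ?_
          rw [(hαrec m hm1' hmn).1 j (by have := Finset.mem_range.mp hj; omega)]
        have hconv_eq : ∀ t : ℝ, (∫ x in (0:ℝ)..t, Dm x * g0 (t - x))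
            = ∑ j ∈ Finset.range (m + 1), α (m + 1) j * a * rexp (-(β j * a * t)) := by
          intro t
          rw [← hdens t, ← sum_exp_conv ha m β (fun j => α m j) hne' t]
        constructor
        · intro t ht
          rw [← hconv_eq t]
          apply intervalIntegral.integral_nonneg ht
          intro x hx
          exact mul_nonneg (ihnn x hx.1) (hg0nn _)
        · set S : Ω → ℝ :=
            fun ω => ∑ i ∈ Finset.univ.filter (fun i : Fin n => (i : ℕ) < m), X i ω with hS
          have hSmeas : Measurable S := Finset.measurable_sum _ (fun i _ => hXmeas i)
          have hXmmeas : Measurable (X ⟨m, hmn'⟩) := hXmeas _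
          have hindepSm : IndepFun S (X ⟨m, hmn'⟩) ℙ := by
            have hnotmem : (⟨m, hmn'⟩ : Fin n)
                ∉ Finset.univ.filter (fun i : Fin n => (i : ℕ) < m) := by simp
            have h := hindep.indepFun_finsetSum_of_notMem hXmeas hnotmem
            have hfun : S = ∑ j ∈ Finset.univ.filter (fun i : Fin n => (i : ℕ) < m), X j :=
              funext fun ω => (Finset.sum_apply ω _ _).symm
            rw [hfun]
            exact h
          have hsplit : (fun ω => ∑ i ∈ Finset.univ.filter
                (fun i : Fin n => (i : ℕ) < m + 1), X i ω)
              = fun ω => S ω + X ⟨m, hmn'⟩ ω := by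
            funext ω
            have hins : Finset.univ.filter (fun i : Fin n => (i : ℕ) < m + 1)
                = insert (⟨m, hmn'⟩ : Fin n)
                    (Finset.univ.filter (fun i : Fin n => (i : ℕ) < m)) := by
              ext i
              simp only [Finset.mem_filter, Finset.mem_univ, true_and, Finset.mem_insert,
                Fin.ext_iff]
              omega
            rw [hins, Finset.sum_insert (by simp)]
            ring
          have hrate : a * (1 + (((⟨m, hmn'⟩ : Fin n) : ℕ) : ℝ) * c)
              * ((n : ℝ) - (((⟨m, hmn'⟩ : Fin n) : ℕ) : ℝ)) = β m * a := by
            rw [hβ m hmn]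
            ring
          have hXm_map : Measure.map (X ⟨m, hmn'⟩) ℙ
              = (volume.restrict (Ioi (0:ℝ))).withDensity
                  (fun y => ENNReal.ofReal (g0 y)) := by
            rw [hXdist ⟨m, hmn'⟩,
              show expMeasure (a * (1 + (((⟨m, hmn'⟩ : Fin n) : ℕ) : ℝ) * c)
                * ((n : ℝ) - (((⟨m, hmn'⟩ : Fin n) : ℕ) : ℝ))) = expMeasure (β m * a) by
                rw [hrate]]
            exact expMeasure_eq_withDensity (by positivity)
          have hprod := (indepFun_iff_map_prod_eq_prod_map_map hSmeas.aemeasurable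
            hXmmeas.aemeasurable).mp hindepSm
          calc Measure.map (fun ω => ∑ i ∈ Finset.univ.filter
                  (fun i : Fin n => (i : ℕ) < m + 1), X i ω) ℙ
              = Measure.map (fun ω => S ω + X ⟨m, hmn'⟩ ω) ℙ := by rw [hsplit]
            _ = Measure.map (fun p : ℝ × ℝ => p.1 + p.2)
                  (Measure.map (fun ω => (S ω, X ⟨m, hmn'⟩ ω)) ℙ) := by
                rw [Measure.map_map (g := fun p : ℝ × ℝ => p.1 + p.2) (measurable_fst.add measurable_snd)
                  (hSmeas.prodMk hXmmeas)]
                rfl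
            _ = Measure.map (fun p : ℝ × ℝ => p.1 + p.2)
                  (((volume.restrict (Ioi (0:ℝ))).withDensity
                      (fun t => ENNReal.ofReal (Dm t))).prod
                    ((volume.restrict (Ioi (0:ℝ))).withDensity
                      (fun y => ENNReal.ofReal (g0 y)))) := by
                rw [hprod, ihmap, hXm_map]
            _ = (volume.restrict (Ioi (0:ℝ))).withDensity
                  (fun t => ∫⁻ x in Ioo 0 t,
                    ENNReal.ofReal (Dm x) * ENNReal.ofReal (g0 (t - x))) :=
                conv_density_Ioi _ _ (ENNReal.measurable_ofReal.comp hDmcont.measurable)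
                  (ENNReal.measurable_ofReal.comp hg0cont.measurable)
            _ = (volume.restrict (Ioi (0 : ℝ))).withDensity
                  (fun t => ENNReal.ofReal
                    (∑ j ∈ Finset.range (m + 1), α (m + 1) j * a
                      * Real.exp (-(β j * a * t)))) := by
                apply withDensity_congr_ae
                filter_upwards [ae_restrict_mem measurableSet_Ioi] with t ht
                rw [lintegral_ofReal_conv Dm g0 hDmcont hg0cont ihnn hg0nn ht, hconv_eq t]
  exact fun k hk1 hk2 => (main k hk1 hk2).2
end

section
/- Let n ≥ 2 be an integer and c ≥ 0 with c ≠ 1/i for every integer 1 ≤ i ≤ n−1. Define β_j = (n−j)(1+jc) and the coefficients α_{k,j} recursively by α_{1,0} = n, α_{k+1,j} = α_{k,j} β_k/(β_k − β_j) for 0 ≤ j ≤ k−1, and α_{k+1,k} = −Σ_{u=0}^{k−1} α_{k,u} β_k/(β_k − β_u). Then for every 1 ≤ k ≤ n and 0 ≤ j ≤ k−1, α_{k,j} = (−1)^{k−1−j} n! (∏_{m=1}^{k−1}(1+mc)) / [ (n−k)! j! (k−1−j)! ∏_{m=0, m≠j}^{k−1} (1+(m+j−n)c) ]. -/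
open Finset

section ZhengJiangAux
open Nat

lemma aux_prod_nat (u : ℕ) : ∏ m ∈ range u, (u - m) = u ! := by
  rw [← Finset.prod_range_add_one_eq_factorial u, ← Finset.prod_range_reflect (fun j => j + 1) u]
  exact prod_congr rfl fun j hj => by have := mem_range.1 hj; omega

lemma aux_prod1 (u : ℕ) : ∏ m ∈ range u, ((m : ℝ) - u) = (-1) ^ u * u ! := by
  calc ∏ m ∈ range u, ((m : ℝ) - u) = ∏ m ∈ range u, ((-1) * ((u : ℝ) - m)) :=
        prod_congr rfl fun _ _ => by ring
    _ = (-1) ^ u * ∏ m ∈ range u, ((u : ℝ) - m) := by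
        rw [prod_mul_distrib, prod_const, card_range]
    _ = (-1) ^ u * u ! := by
        rw [← aux_prod_nat u, Nat.cast_prod]
        congr 1
        exact prod_congr rfl fun j hj => by
          rw [Nat.cast_sub (mem_range.1 hj).le]

lemma aux_prod2 (K u : ℕ) (hu : u ≤ K) :
    ∏ m ∈ Ico (u + 1) (K + 1), ((m : ℝ) - u) = (K - u)! := by
  rw [Finset.prod_Ico_eq_prod_range]
  have h2 : K + 1 - (u + 1) = K - u := by omega
  rw [h2, ← Finset.prod_range_add_one_eq_factorial (K - u), Nat.cast_prod]
  exact prod_congr rfl fun j hj => by push_cast; ring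

lemma aux_prod_erase (K u : ℕ) (hu : u ≤ K) :
    ∏ m ∈ (range (K + 1)).erase u, ((m : ℝ) - u) = (-1) ^ u * u ! * (K - u)! := by
  have hsplit : (range (K + 1)).erase u = range u ∪ Ico (u + 1) (K + 1) := by
    ext m; simp only [mem_erase, mem_range, mem_union, mem_Ico]; omega
  have hdisj : Disjoint (range u) (Ico (u + 1) (K + 1)) := by
    simp only [Finset.disjoint_left, mem_range, mem_Ico]; omega
  rw [hsplit, prod_union hdisj, aux_prod1, aux_prod2 K u hu, mul_assoc]

lemma aux_lagrange (T : Finset ℕ) (hT : T.Nonempty) (c t : ℝ) (hc : c ≠ 0) :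
    ∑ u ∈ T, ∏ m ∈ T.erase u, ((t + m * c) * ((((m : ℝ) - u) * c)⁻¹)) = 1 := by
  have hinj : Set.InjOn (fun u : ℕ => -(u : ℝ) * c) T := by
    intro x _ y _ hxy
    simp only [neg_mul] at hxy
    have : (x : ℝ) = y := by
      have := mul_right_cancel₀ hc (neg_injective hxy)
      exact this
    exact_mod_cast this
  have hs := congrArg (Polynomial.eval t) (Lagrange.sum_basis hinj hT)
  rw [Polynomial.eval_finset_sum, Polynomial.eval_one] at hs
  rw [← hs]
  refine sum_congr rfl fun u hu => ?_
  rw [Lagrange.basis, Polynomial.eval_prod]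
  refine prod_congr rfl fun m hm => ?_
  simp only [Lagrange.basisDivisor, Polynomial.eval_mul, Polynomial.eval_C,
    Polynomial.eval_sub, Polynomial.eval_X]
  rw [mul_comm]
  congr 1
  · ring
  · congr 1; ring

lemma aux_pf (T : Finset ℕ) (hT : T.Nonempty) (c t : ℝ) (hc : c ≠ 0)
    (h : ∀ m ∈ T, t + m * c ≠ 0) :
    (∏ m ∈ T, (t + m * c))⁻¹ =
      ∑ u ∈ T, ((t + u * c) * ∏ m ∈ T.erase u, (((m : ℝ) - u) * c))⁻¹ := by
  have hL := aux_lagrange T hT c t hc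
  have hP : ∏ m ∈ T, (t + m * c) ≠ 0 := prod_ne_zero_iff.2 h
  calc (∏ m ∈ T, (t + m * c))⁻¹
      = (∏ m ∈ T, (t + m * c))⁻¹ *
          ∑ u ∈ T, ∏ m ∈ T.erase u, ((t + m * c) * ((((m : ℝ) - u) * c)⁻¹)) := by
        rw [hL, mul_one]
    _ = ∑ u ∈ T, ((t + u * c) * ∏ m ∈ T.erase u, (((m : ℝ) - u) * c))⁻¹ := by
        rw [mul_sum]
        refine sum_congr rfl fun u hu => ?_
        rw [prod_mul_distrib, prod_inv_distrib]
        have hQ : (t + u * c) * ∏ m ∈ T.erase u, (t + m * c) = ∏ m ∈ T, (t + m * c) :=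
          Finset.mul_prod_erase T (fun m => t + (m:ℝ) * c) hu
        have hu0 : t + u * c ≠ 0 := h u hu
        have hQ0 : ∏ m ∈ T.erase u, (t + m * c) ≠ 0 :=
          prod_ne_zero_iff.2 fun m hm => h m (mem_of_mem_erase hm)
        have hW0 : ∏ m ∈ T.erase u, (((m : ℝ) - u) * c) ≠ 0 :=
          prod_ne_zero_iff.2 fun m hm =>
            mul_ne_zero (sub_ne_zero.2 (by exact_mod_cast (mem_erase.1 hm).1)) hc
        rw [← hQ]
        generalize ∏ m ∈ T.erase u, (t + m * c) = P at hQ0 ⊢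
        generalize ∏ m ∈ T.erase u, (((m : ℝ) - u) * c) = W at hW0 ⊢
        field_simp

noncomputable def gaux (K : ℕ) (a c : ℝ) (j u : ℕ) : ℝ :=
  ((-1 : ℝ) ^ j * (-1) ^ u * (((j : ℝ) - u) * c)) /
    ((j ! : ℝ) * ((K - j)! : ℝ) * (u ! : ℝ) * ((K - u)! : ℝ) * c ^ K * (a + ((j : ℝ) + u) * c))

lemma gaux_antisymm (K : ℕ) (a c : ℝ) (j u : ℕ) : gaux K a c j u = - gaux K a c u j := by
  unfold gaux
  ring

lemma aux_antisym (s : Finset ℕ) (f : ℕ → ℕ → ℝ) (hf : ∀ j ∈ s, ∀ u ∈ s, f j u = -f u j) :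
    ∑ j ∈ s, ∑ u ∈ s, f j u = 0 := by
  have h1 : ∑ j ∈ s, ∑ u ∈ s, f j u = -∑ j ∈ s, ∑ u ∈ s, f u j := by
    rw [← Finset.sum_neg_distrib]
    exact sum_congr rfl fun j hj => by
      rw [← Finset.sum_neg_distrib]
      exact sum_congr rfl fun u hu => hf j hj u hu
  have h2 : ∑ j ∈ s, ∑ u ∈ s, f u j = ∑ j ∈ s, ∑ u ∈ s, f j u := Finset.sum_comm
  rw [h2] at h1
  linarith

lemma key_sum (K : ℕ) (hK : 1 ≤ K) (a c : ℝ)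
    (h : ∀ j u : ℕ, j ≤ K → u ≤ K → j ≠ u → a + ((j : ℝ) + u) * c ≠ 0) :
    ∑ j ∈ range (K + 1), (-1 : ℝ) ^ j /
      ((j ! : ℝ) * ((K - j)! : ℝ) *
        ∏ m ∈ (range (K + 1)).erase j, (a + ((m : ℝ) + j) * c)) = 0 := by
  by_cases hc0 : c = 0
  · subst hc0
    have ha : a ≠ 0 := by
      have := h 1 0 hK (Nat.zero_le K) one_ne_zero
      simpa using this
    have hstep : ∀ j ∈ range (K + 1),
        (-1 : ℝ) ^ j / ((j ! : ℝ) * ((K - j)! : ℝ) *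
          ∏ m ∈ (range (K + 1)).erase j, (a + ((m : ℝ) + j) * 0)) =
        ((-1 : ℝ) ^ j * (K.choose j : ℝ)) * ((K ! : ℝ) * a ^ K)⁻¹ := by
      intro j hj
      have hjK : j ≤ K := by have := mem_range.1 hj; omega
      have hprod : ∏ m ∈ (range (K + 1)).erase j, (a + ((m : ℝ) + j) * 0) = a ^ K := by
        rw [prod_congr rfl fun m _ => by rw [mul_zero, add_zero]]
        rw [prod_const, card_erase_of_mem (mem_range.2 (by omega)), card_range]
        norm_num
      rw [hprod]
      have hfact : (K ! : ℝ) = (K.choose j : ℝ) * (j ! : ℝ) * ((K - j)! : ℝ) := by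
        exact_mod_cast (Nat.choose_mul_factorial_mul_factorial hjK).symm
      have h1 : (j ! : ℝ) ≠ 0 := Nat.cast_ne_zero.2 (Nat.factorial_ne_zero j)
      have h2 : ((K - j)! : ℝ) ≠ 0 := Nat.cast_ne_zero.2 (Nat.factorial_ne_zero _)
      have h3 : (K.choose j : ℝ) ≠ 0 := Nat.cast_ne_zero.2 (Nat.choose_pos hjK).ne'
      rw [hfact]
      field_simp
    rw [sum_congr rfl hstep, ← sum_mul]
    have hzero : ∑ j ∈ range (K + 1), ((-1 : ℝ) ^ j * (K.choose j : ℝ)) = 0 := by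
      have := Int.alternating_sum_range_choose_of_ne (Nat.one_le_iff_ne_zero.1 hK)
      have h2 := congrArg (Int.cast : ℤ → ℝ) this
      push_cast at h2
      convert h2 using 2
    rw [hzero, zero_mul]
  · -- c ≠ 0
    have hstep : ∀ j ∈ range (K + 1),
        (-1 : ℝ) ^ j / ((j ! : ℝ) * ((K - j)! : ℝ) *
          ∏ m ∈ (range (K + 1)).erase j, (a + ((m : ℝ) + j) * c)) =
        ∑ u ∈ (range (K + 1)).erase j, gaux K a c j u := by
      intro j hj
      have hjK : j ≤ K := by have := mem_range.1 hj; omega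
      set T := (range (K + 1)).erase j with hT
      have hTne : T.Nonempty := by
        rw [← Finset.card_pos, hT, card_erase_of_mem (mem_range.2 (by omega)), card_range]
        omega
      set t := a + (j : ℝ) * c with ht
      have hmemne : ∀ m ∈ T, t + (m : ℝ) * c ≠ 0 := by
        intro m hm
        have hmK : m ≤ K := by have := mem_range.1 (mem_of_mem_erase hm); omega
        have hmj : m ≠ j := (mem_erase.1 hm).1
        have := h m j hmK hjK hmj
        intro h0; apply this; rw [← h0, ht]; ring
      have hD : ∏ m ∈ T, (a + ((m : ℝ) + j) * c) = ∏ m ∈ T, (t + (m : ℝ) * c) :=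
        prod_congr rfl fun m _ => by rw [ht]; ring
      have hpf := aux_pf T hTne c t hc0 hmemne
      rw [hD, div_eq_mul_inv, mul_inv, mul_inv, hpf, mul_sum, mul_sum]
      refine sum_congr rfl fun u hu => ?_
      have huK : u ≤ K := by have := mem_range.1 (mem_of_mem_erase hu); omega
      have huj : u ≠ j := (mem_erase.1 hu).1
      -- compute the weight product
      have hjmem : j ∈ (range (K + 1)).erase u :=
        mem_erase.2 ⟨huj.symm, mem_range.2 (by omega)⟩
      have hW : (((j : ℝ) - u) * c) * ∏ m ∈ T.erase u, (((m : ℝ) - u) * c) =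
          (-1 : ℝ) ^ u * (u ! : ℝ) * ((K - u)! : ℝ) * c ^ K := by
        have hcomm : T.erase u = ((range (K + 1)).erase u).erase j := by
          rw [hT, Finset.erase_right_comm]
        rw [hcomm, Finset.mul_prod_erase ((range (K + 1)).erase u)
          (fun m => ((m : ℝ) - u) * c) hjmem, prod_mul_distrib, prod_const,
          card_erase_of_mem (mem_range.2 (by omega)), card_range,
          aux_prod_erase K u huK]
        norm_num
      have hju0 : ((j : ℝ) - u) ≠ 0 := sub_ne_zero.2 fun hh => huj (by exact_mod_cast hh.symm)
      have hWne : ∏ m ∈ T.erase u, (((m : ℝ) - u) * c) ≠ 0 :=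
        prod_ne_zero_iff.2 fun m hm =>
          mul_ne_zero (sub_ne_zero.2 (by exact_mod_cast (mem_erase.1 hm).1)) hc0
      have htu : t + (u : ℝ) * c ≠ 0 := by
        have := h j u hjK huK (Ne.symm huj)
        intro h0; apply this; rw [← h0, ht]; ring
      have haju : a + ((j : ℝ) + u) * c ≠ 0 := by
        intro h0; apply htu; rw [ht, ← h0]; ring
      have h1 : (j ! : ℝ) ≠ 0 := Nat.cast_ne_zero.2 (Nat.factorial_ne_zero j)
      have h2 : ((K - j)! : ℝ) ≠ 0 := Nat.cast_ne_zero.2 (Nat.factorial_ne_zero _)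
      have h3 : (u ! : ℝ) ≠ 0 := Nat.cast_ne_zero.2 (Nat.factorial_ne_zero u)
      have h4 : ((K - u)! : ℝ) ≠ 0 := Nat.cast_ne_zero.2 (Nat.factorial_ne_zero _)
      unfold gaux
      rw [mul_inv]
      have hWval : ∏ m ∈ T.erase u, (((m : ℝ) - u) * c) =
          ((-1 : ℝ) ^ u * (u ! : ℝ) * ((K - u)! : ℝ) * c ^ K) / (((j : ℝ) - u) * c) := by
        rw [eq_div_iff (mul_ne_zero hju0 hc0), ← hW]; ring
      rw [hWval]
      have ht' : t + (u : ℝ) * c = a + ((j : ℝ) + u) * c := by rw [ht]; ring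
      rw [ht']
      have hpow : (-1 : ℝ) ^ u ≠ 0 := pow_ne_zero u (by norm_num)
      have hsq : (-1 : ℝ) ^ u * (-1) ^ u = 1 := by
        rw [← pow_add, ← two_mul, pow_mul, neg_one_sq, one_pow]
      field_simp
      linear_combination -hsq
    rw [sum_congr rfl hstep]
    have hfilter : ∀ j : ℕ, ∑ u ∈ (range (K + 1)).erase j, gaux K a c j u =
        ∑ u ∈ range (K + 1), if u ≠ j then gaux K a c j u else 0 := by
      intro j
      rw [← Finset.filter_ne' (range (K + 1)) j, sum_filter]
    rw [sum_congr rfl fun j _ => hfilter j]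
    apply aux_antisym
    intro j _ u _
    by_cases hju : u = j
    · subst hju; simp
    · rw [if_pos hju, if_pos (Ne.symm hju)]
      exact gaux_antisymm K a c j u

noncomputable def Fa (n : ℕ) (c : ℝ) (k j : ℕ) : ℝ :=
  (-1 : ℝ) ^ (k - 1 - j) * (n.factorial : ℝ) *
      (∏ m ∈ Finset.Icc 1 (k - 1), (1 + (m : ℝ) * c)) /
    (((n - k).factorial : ℝ) * (j.factorial : ℝ) * ((k - 1 - j).factorial : ℝ) *
      ∏ m ∈ (Finset.range k).erase j, (1 + ((m : ℝ) + (j : ℝ) - (n : ℝ)) * c))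

lemma aux_ne (n : ℕ) (hn : 2 ≤ n) (c : ℝ) (hc : 0 ≤ c)
    (hcne : ∀ i : ℕ, 1 ≤ i → i ≤ n - 1 → c ≠ 1 / (i : ℝ)) (m j : ℕ) (h1 : 1 ≤ m + j) :
    1 + ((m : ℝ) + j - n) * c ≠ 0 := by
  rcases le_or_gt n (m + j) with hge | hlt
  · have h0 : (0 : ℝ) ≤ (m : ℝ) + j - n := by
      have : (n : ℝ) ≤ (m : ℝ) + j := by exact_mod_cast hge
      linarith
    have := mul_nonneg h0 hc
    intro h; linarith
  · set i := n - (m + j) with hi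
    have hi1 : 1 ≤ i := by omega
    have hi2 : i ≤ n - 1 := by omega
    have hipos : (0 : ℝ) < i := by exact_mod_cast hi1
    intro h0
    apply hcne i hi1 hi2
    have hicast : (m : ℝ) + j - n = -(i : ℝ) := by
      have h3 : ((i : ℕ) : ℝ) = (n : ℝ) - ((m + j : ℕ) : ℝ) := by
        rw [hi, Nat.cast_sub (by omega)]
      push_cast at h3
      linarith
    rw [hicast] at h0
    rw [eq_div_iff hipos.ne']
    linarith

lemma stepA (n : ℕ) (hn : 2 ≤ n) (c : ℝ) (hc : 0 ≤ c)
    (hcne : ∀ i : ℕ, 1 ≤ i → i ≤ n - 1 → c ≠ 1 / (i : ℝ))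
    (K j : ℕ) (hK : 1 ≤ K) (hKn : K ≤ n - 1) (hj : j < K) :
    Fa n c (K + 1) j = Fa n c K j * (((n : ℝ) - K) * (1 + (K : ℝ) * c)) /
      (((n : ℝ) - K) * (1 + (K : ℝ) * c) - ((n : ℝ) - j) * (1 + (j : ℝ) * c)) := by
  have hd : ((n : ℝ) - K) * (1 + (K : ℝ) * c) - ((n : ℝ) - j) * (1 + (j : ℝ) * c) =
      -(((K : ℝ) - j) * (1 + ((K : ℝ) + j - n) * c)) := by ring
  have hs : (-1 : ℝ) ^ (K - j) = -(-1 : ℝ) ^ (K - 1 - j) := by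
    rw [show K - j = (K - 1 - j) + 1 from by omega, pow_succ]; ring
  have hIcc : ∏ m ∈ Finset.Icc 1 K, (1 + (m : ℝ) * c) =
      (∏ m ∈ Finset.Icc 1 (K - 1), (1 + (m : ℝ) * c)) * (1 + (K : ℝ) * c) := by
    conv_lhs => rw [show K = K - 1 + 1 from by omega]
    rw [Finset.prod_Icc_succ_top (by omega) (fun m => 1 + (m : ℝ) * c),
      show K - 1 + 1 = K from by omega]
  have hf1 : ((n - K)! : ℝ) = ((n : ℝ) - K) * ((n - (K + 1))! : ℝ) := by
    rw [show n - K = (n - (K + 1)) + 1 from by omega, Nat.factorial_succ]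
    have h3 : ((n - (K + 1) : ℕ) : ℝ) = (n : ℝ) - (K + 1) := by
      rw [Nat.cast_sub (by omega)]; push_cast; ring
    push_cast [h3]; ring
  have hf2 : ((K - j)! : ℝ) = ((K : ℝ) - j) * ((K - 1 - j)! : ℝ) := by
    rw [show K - j = (K - 1 - j) + 1 from by omega, Nat.factorial_succ]
    have h3 : ((K - 1 - j : ℕ) : ℝ) = (K : ℝ) - 1 - j := by
      rw [show K - 1 - j = K - (1 + j) from by omega, Nat.cast_sub (by omega)]
      push_cast; ring
    push_cast [h3]; ring
  have hD : ∏ m ∈ (Finset.range (K + 1)).erase j, (1 + ((m : ℝ) + j - n) * c) =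
      (∏ m ∈ (Finset.range K).erase j, (1 + ((m : ℝ) + j - n) * c)) *
        (1 + ((K : ℝ) + j - n) * c) := by
    rw [Finset.range_add_one, Finset.erase_insert_of_ne (by omega : K ≠ j),
      Finset.prod_insert (fun hmem => (Finset.mem_range.1 (Finset.mem_of_mem_erase hmem)).false),
      mul_comm]
  -- nonvanishing facts
  have hnK : (0 : ℝ) < (n : ℝ) - K := by
    have : (K : ℝ) < n := by exact_mod_cast (by omega : K < n)
    linarith
  have hKc : (0 : ℝ) < 1 + (K : ℝ) * c := by
    have : (0 : ℝ) ≤ (K : ℝ) * c := mul_nonneg (Nat.cast_nonneg K) hc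
    linarith
  have hKj : (0 : ℝ) < (K : ℝ) - j := by
    have : (j : ℝ) < K := by exact_mod_cast hj
    linarith
  have hKjn : 1 + ((K : ℝ) + j - n) * c ≠ 0 := aux_ne n hn c hc hcne K j (by omega)
  have hDne : ∏ m ∈ (Finset.range K).erase j, (1 + ((m : ℝ) + j - n) * c) ≠ 0 :=
    prod_ne_zero_iff.2 fun m hm =>
      aux_ne n hn c hc hcne m j (by
        have := (Finset.mem_erase.1 hm).1; omega)
  have hfa : ((n - (K + 1))! : ℝ) ≠ 0 := Nat.cast_ne_zero.2 (Nat.factorial_ne_zero _)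
  have hfb : (j ! : ℝ) ≠ 0 := Nat.cast_ne_zero.2 (Nat.factorial_ne_zero _)
  have hfc : ((K - 1 - j)! : ℝ) ≠ 0 := Nat.cast_ne_zero.2 (Nat.factorial_ne_zero _)
  unfold Fa
  simp only [Nat.add_sub_cancel]
  rw [hd, hs, hIcc, hf1, hf2, hD]
  generalize ∏ m ∈ Finset.Icc 1 (K - 1), (1 + (m : ℝ) * c) = A
  generalize ∏ m ∈ (Finset.range K).erase j, (1 + ((m : ℝ) + j - n) * c) = D at hDne ⊢
  field_simp

lemma sumB (n : ℕ) (hn : 2 ≤ n) (c : ℝ) (hc : 0 ≤ c)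
    (hcne : ∀ i : ℕ, 1 ≤ i → i ≤ n - 1 → c ≠ 1 / (i : ℝ))
    (K : ℕ) (hK : 1 ≤ K) (hKn : K ≤ n - 1) :
    ∑ j ∈ range (K + 1), Fa n c (K + 1) j = 0 := by
  set Cst : ℝ := ((-1 : ℝ) ^ K * (n ! : ℝ) * ∏ m ∈ Finset.Icc 1 K, (1 + (m : ℝ) * c)) /
    ((n - (K + 1))! : ℝ) with hCst
  have hterm : ∀ j ∈ range (K + 1), Fa n c (K + 1) j =
      Cst * ((-1 : ℝ) ^ j / ((j ! : ℝ) * ((K - j)! : ℝ) *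
        ∏ m ∈ (range (K + 1)).erase j, ((1 - (n : ℝ) * c) + ((m : ℝ) + j) * c))) := by
    intro j hj
    have hjK : j ≤ K := by have := mem_range.1 hj; omega
    have hsq : (-1 : ℝ) ^ j * (-1) ^ j = 1 := by
      rw [← pow_add, ← two_mul, pow_mul, neg_one_sq, one_pow]
    have hsign : (-1 : ℝ) ^ (K - j) = (-1) ^ K * (-1) ^ j := by
      calc (-1 : ℝ) ^ (K - j) = (-1) ^ (K - j) * ((-1) ^ j * (-1) ^ j) := by
            rw [hsq, mul_one]
        _ = (-1) ^ K * (-1) ^ j := by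
            rw [← mul_assoc, ← pow_add, show K - j + j = K from by omega]
    have hprod : ∏ m ∈ (range (K + 1)).erase j, (1 + ((m : ℝ) + j - n) * c) =
        ∏ m ∈ (range (K + 1)).erase j, ((1 - (n : ℝ) * c) + ((m : ℝ) + j) * c) :=
      prod_congr rfl fun m _ => by ring
    have hDne : ∏ m ∈ (range (K + 1)).erase j, ((1 - (n : ℝ) * c) + ((m : ℝ) + j) * c) ≠ 0 :=
      prod_ne_zero_iff.2 fun m hm => by
        have h2 := aux_ne n hn c hc hcne m j (by have := (Finset.mem_erase.1 hm).1; omega)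
        intro h0; apply h2; rw [← h0]; ring
    have hfa : ((n - (K + 1))! : ℝ) ≠ 0 := Nat.cast_ne_zero.2 (Nat.factorial_ne_zero _)
    have hfb : (j ! : ℝ) ≠ 0 := Nat.cast_ne_zero.2 (Nat.factorial_ne_zero _)
    have hfc : ((K - j)! : ℝ) ≠ 0 := Nat.cast_ne_zero.2 (Nat.factorial_ne_zero _)
    unfold Fa
    simp only [Nat.add_sub_cancel]
    rw [hsign, hprod, hCst]
    generalize ∏ m ∈ Finset.Icc 1 K, (1 + (m : ℝ) * c) = A
    generalize ∏ m ∈ (range (K + 1)).erase j, ((1 - (n : ℝ) * c) + ((m : ℝ) + j) * c) = D at hDne ⊢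
    field_simp
  rw [sum_congr rfl hterm, ← mul_sum]
  have hkey := key_sum K hK (1 - (n : ℝ) * c) c (by
    intro j u hjK huK hju
    have h2 := aux_ne n hn c hc hcne j u (by omega)
    intro h0; apply h2; rw [← h0]; ring)
  rw [hkey, mul_zero]

end ZhengJiangAux

/-- Closed formula (Zheng–Jiang) for the coefficients `α k j` defined by the recursion
`α 1 0 = n`, `α (k+1) j = α k j β k/(β k - β j)` for `j ≤ k-1`,
`α (k+1) k = -Σ_{u<k} α k u β k/(β k - β u)`, where `β j = (n-j)(1+jc)`. -/
theorem alpha_closed_formula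
    (n : ℕ) (hn : 2 ≤ n) (c : ℝ) (hc : 0 ≤ c)
    (hcne : ∀ i : ℕ, 1 ≤ i → i ≤ n - 1 → c ≠ 1 / (i : ℝ))
    (β : ℕ → ℝ) (hβ : ∀ j ≤ n - 1, β j = ((n : ℝ) - (j : ℝ)) * (1 + (j : ℝ) * c))
    (α : ℕ → ℕ → ℝ) (hα1 : α 1 0 = n)
    (hαrec : ∀ k, 1 ≤ k → k ≤ n - 1 →
      (∀ j ≤ k - 1, α (k + 1) j = α k j * β k / (β k - β j)) ∧
      α (k + 1) k = -∑ u ∈ Finset.range k, α k u * β k / (β k - β u)) :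
    ∀ k, 1 ≤ k → k ≤ n → ∀ j ≤ k - 1,
      α k j =
        (-1 : ℝ) ^ (k - 1 - j) * (n.factorial : ℝ) *
            (∏ m ∈ Finset.Icc 1 (k - 1), (1 + (m : ℝ) * c)) /
          (((n - k).factorial : ℝ) * (j.factorial : ℝ) * ((k - 1 - j).factorial : ℝ) *
            ∏ m ∈ (Finset.range k).erase j, (1 + ((m : ℝ) + (j : ℝ) - (n : ℝ)) * c)) := by
  have main : ∀ k, 1 ≤ k → k ≤ n → ∀ j ≤ k - 1, α k j = Fa n c k j := by
    intro k
    induction k with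
    | zero => intro h; exact absurd h (by omega)
    | succ K ih =>
      intro hk1 hkn j hj
      have hjK : j ≤ K := by omega
      by_cases hK0 : K = 0
      · subst hK0
        have hj0 : j = 0 := by omega
        subst hj0
        rw [hα1]
        unfold Fa
        have hfac : (n.factorial : ℝ) = (n : ℝ) * ((n - 1).factorial : ℝ) := by
          exact_mod_cast (Nat.mul_factorial_pred (by omega : n ≠ 0)).symm
        have hfa : ((n - 1).factorial : ℝ) ≠ 0 := Nat.cast_ne_zero.2 (Nat.factorial_ne_zero _)
        simp only [Nat.sub_self, Nat.zero_sub, Finset.Icc_self, pow_zero,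
          Nat.factorial_zero, Nat.cast_one]
        rw [show Finset.Icc 1 (1 - 1) = (∅ : Finset ℕ) from rfl,
          show (Finset.range 1).erase 0 = (∅ : Finset ℕ) from rfl, Finset.prod_empty,
          Finset.prod_empty, hfac]
        field_simp
      · have hK1 : 1 ≤ K := by omega
        have hKn1 : K ≤ n - 1 := by omega
        obtain ⟨hrec1, hrec2⟩ := hαrec K hK1 hKn1
        by_cases hjEq : j = K
        · rw [hjEq, hrec2]
          have hsum : ∀ u ∈ range K, α K u * β K / (β K - β u) = Fa n c (K + 1) u := by
            intro u hu
            have huK : u < K := mem_range.1 hu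
            have hIH : α K u = Fa n c K u := ih hK1 (by omega) u (by omega)
            rw [hIH, hβ K (by omega), hβ u (by omega)]
            exact (stepA n hn c hc hcne K u hK1 hKn1 huK).symm
          rw [sum_congr rfl hsum]
          have hB := sumB n hn c hc hcne K hK1 hKn1
          rw [sum_range_succ] at hB
          linarith
        · have hjK' : j < K := by omega
          rw [hrec1 j (by omega)]
          have hIH : α K j = Fa n c K j := ih hK1 (by omega) j (by omega)
          rw [hIH, hβ K (by omega), hβ j (by omega)]
          exact (stepA n hn c hc hcne K j hK1 hKn1 hjK').symm
  exact main
end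

section
/- Fix reals a > 0 and c > 0. For each integer k ≥ 1 let n_k ≥ k be an integer, and on a common probability space let T_k be a random variable whose law equals the law of the sum of k independent exponential random variables with rates a(1+ic)(n_k−i), i = 0, 1, …, k−1. Then T_k → 0 almost surely as k → ∞. In particular, taking n_k = k, the last-to-default time τ^n(n) in a portfolio of n names tends to 0 almost surely as n → ∞. -/
open MeasureTheory ProbabilityTheory Filter
open scoped ProbabilityTheory ENNReal

namespace LastDefaultAux

open Real Set

lemma sum_one_div_le_sqrt (k : ℕ) :
    ∑ i ∈ Finset.range k, (1:ℝ)/(i+1) ≤ 2 * Real.sqrt k := by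
  induction k with
  | zero => simp
  | succ k ih =>
    rw [Finset.sum_range_succ]
    have hs0 : (0:ℝ) ≤ Real.sqrt k := Real.sqrt_nonneg _
    have ht1 : (1:ℝ) ≤ Real.sqrt ((k:ℝ)+1) := by
      rw [Real.one_le_sqrt]
      have := Nat.cast_nonneg (α := ℝ) k
      linarith
    have hst : Real.sqrt k ≤ Real.sqrt ((k:ℝ)+1) := Real.sqrt_le_sqrt (by linarith)
    have hsq : Real.sqrt ((k:ℝ)+1) ^ 2 = (k:ℝ)+1 := Real.sq_sqrt (by positivity)
    have hsq' : Real.sqrt (k:ℝ) ^ 2 = (k:ℝ) := Real.sq_sqrt (by positivity)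
    have key : 1/((k:ℝ)+1) ≤ 2 * (Real.sqrt ((k:ℝ)+1) - Real.sqrt k) := by
      rw [div_le_iff₀ (by positivity)]
      nlinarith [hsq, hsq', ht1, hst, hs0]
    have hcast : ((k+1 : ℕ):ℝ) = (k:ℝ)+1 := by push_cast; ring
    rw [hcast]
    linarith

lemma expMeasure_eq (r : ℝ) : expMeasure r = volume.withDensity (exponentialPDF r) := rfl

lemma expMeasure_Iio_zero (r : ℝ) : expMeasure r (Iio 0) = 0 := by
  rw [expMeasure_eq, withDensity_apply _ measurableSet_Iio]
  exact lintegral_exponentialPDF_of_nonpos le_rfl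

lemma expMeasure_Ioi {r t : ℝ} (hr : 0 < r) (ht : 0 ≤ t) :
    expMeasure r (Ioi t) = ENNReal.ofReal (Real.exp (-(r*t))) := by
  haveI := isProbabilityMeasure_expMeasure hr
  have hIic : expMeasure r (Iic t) = ENNReal.ofReal (1 - Real.exp (-(r*t))) := by
    rw [expMeasure_eq, withDensity_apply _ measurableSet_Iic,
      lintegral_exponentialPDF_eq_antiDeriv hr t, if_pos ht]
  have hcompl : Ioi t = (Iic t)ᶜ := by simp
  have he1 : Real.exp (-(r*t)) ≤ 1 := by
    rw [Real.exp_le_one_iff]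
    nlinarith
  rw [hcompl, measure_compl measurableSet_Iic (measure_ne_top _ _), measure_univ, hIic,
    ENNReal.ofReal_sub 1 (Real.exp_pos _).le, ENNReal.ofReal_one]
  exact ENNReal.sub_sub_cancel ENNReal.one_ne_top (ENNReal.ofReal_le_one.2 he1)

lemma pi_eval {k : ℕ} (μ : Fin k → Measure ℝ) [∀ i, IsProbabilityMeasure (μ i)]
    (i : Fin k) {s : Set ℝ} (hs : MeasurableSet s) :
    Measure.pi μ {x | x i ∈ s} = μ i s := by
  have hset : {x : Fin k → ℝ | x i ∈ s}
      = Set.pi Set.univ (Function.update (fun _ => (Set.univ : Set ℝ)) i s) := by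
    ext x
    simp only [Set.mem_setOf_eq, Set.mem_pi, Set.mem_univ, true_implies]
    constructor
    · intro h j
      rcases eq_or_ne j i with rfl | hj
      · simpa using h
      · simp [Function.update_of_ne hj]
    · intro h
      simpa using h i
  rw [hset, Measure.pi_pi]
  rw [Finset.prod_eq_single i (fun j _ hj => by simp [Function.update_of_ne hj])
    (by simp)]
  simp

lemma pi_sum_tail {k : ℕ} (r : Fin k → ℝ) (hr : ∀ i, 0 < r i)
    (w : Fin k → ℝ) (hw : ∀ i, 0 ≤ w i) (hw1 : ∑ i, w i = 1) (ε : ℝ) (hε : 0 < ε)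
    (B : ℝ) (hB : ∀ i, B ≤ r i * (ε * w i)) :
    Measure.map (fun x : Fin k → ℝ => ∑ i, x i) (Measure.pi fun i => expMeasure (r i))
      {x | ε < |x|} ≤ (k : ℝ≥0∞) * ENNReal.ofReal (Real.exp (-B)) := by
  haveI : ∀ i, IsProbabilityMeasure (expMeasure (r i)) :=
    fun i => isProbabilityMeasure_expMeasure (hr i)
  have hmeas_abs : MeasurableSet {x : ℝ | ε < |x|} :=
    measurableSet_lt measurable_const measurable_abs
  have hsum_meas : Measurable (fun x : Fin k → ℝ => ∑ i, x i) :=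
    Finset.measurable_sum _ (fun i _ => measurable_pi_apply i)
  rw [Measure.map_apply hsum_meas hmeas_abs]
  set μ := Measure.pi fun i : Fin k => expMeasure (r i) with hμ
  have hsub : (fun x : Fin k → ℝ => ∑ i, x i) ⁻¹' {x | ε < |x|}
      ⊆ (⋃ i, {x : Fin k → ℝ | x i < 0}) ∪ ⋃ i, {x : Fin k → ℝ | ε * w i < x i} := by
    intro x hx
    by_contra hmem
    simp only [Set.mem_union, Set.mem_iUnion, Set.mem_setOf_eq, not_or, not_exists,
      not_lt] at hmem
    obtain ⟨h1, h2⟩ := hmem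
    have hsum_le : ∑ i, x i ≤ ε := by
      calc ∑ i, x i ≤ ∑ i, ε * w i := Finset.sum_le_sum fun i _ => h2 i
        _ = ε := by rw [← Finset.mul_sum, hw1, mul_one]
    have hsum_nonneg : 0 ≤ ∑ i, x i := Finset.sum_nonneg fun i _ => h1 i
    have habs : |∑ i, x i| ≤ ε := abs_le.2 ⟨by linarith, hsum_le⟩
    exact absurd hx (by simpa using not_lt.2 habs)
  have hA0 : μ (⋃ i, {x : Fin k → ℝ | x i < 0}) = 0 := by
    refine measure_iUnion_null fun i => ?_
    rw [show {x : Fin k → ℝ | x i < 0} = {x : Fin k → ℝ | x i ∈ Iio 0} from rfl,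
      pi_eval _ i measurableSet_Iio]
    exact expMeasure_Iio_zero _
  calc μ ((fun x : Fin k → ℝ => ∑ i, x i) ⁻¹' {x | ε < |x|})
      ≤ μ ((⋃ i, {x : Fin k → ℝ | x i < 0}) ∪ ⋃ i, {x : Fin k → ℝ | ε * w i < x i}) :=
        measure_mono hsub
    _ ≤ μ (⋃ i, {x : Fin k → ℝ | x i < 0}) + μ (⋃ i, {x : Fin k → ℝ | ε * w i < x i}) :=
        measure_union_le _ _
    _ = μ (⋃ i, {x : Fin k → ℝ | ε * w i < x i}) := by rw [hA0, zero_add]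
    _ ≤ ∑' i : Fin k, μ {x : Fin k → ℝ | ε * w i < x i} := measure_iUnion_le _
    _ ≤ ∑' i : Fin k, ENNReal.ofReal (Real.exp (-B)) := by
        refine ENNReal.tsum_le_tsum fun i => ?_
        rw [show {x : Fin k → ℝ | ε * w i < x i} = {x : Fin k → ℝ | x i ∈ Ioi (ε * w i)}
          from rfl, pi_eval _ i measurableSet_Ioi,
          expMeasure_Ioi (hr i) (mul_nonneg hε.le (hw i))]
        apply ENNReal.ofReal_le_ofReal
        apply Real.exp_le_exp.2
        have := hB i
        rw [mul_comm ε (w i)] at this ⊢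
        linarith [hB i]
    _ = (k : ℝ≥0∞) * ENNReal.ofReal (Real.exp (-B)) := by
        rw [tsum_fintype]
        simp [Finset.sum_const, Finset.card_univ, nsmul_eq_mul]

lemma summable_aux (d : ℝ) (hd : 0 < d) :
    ∑' K : ℕ, (K : ℝ≥0∞) * ENNReal.ofReal (Real.exp (-(d * Real.sqrt K))) ≠ ⊤ := by
  have hsqrt_tendsto : Tendsto (fun K : ℕ => Real.sqrt K) atTop atTop := by
    rw [tendsto_atTop]
    intro b
    filter_upwards [eventually_ge_atTop (Nat.ceil (b^2))] with K hK
    have h1 : b^2 ≤ (K:ℝ) := le_trans (Nat.le_ceil _) (by exact_mod_cast hK)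
    rcases le_or_gt b 0 with hb | hb
    · exact le_trans hb (Real.sqrt_nonneg _)
    · have h2 : Real.sqrt (b^2) ≤ Real.sqrt K := Real.sqrt_le_sqrt h1
      rwa [Real.sqrt_sq hb.le] at h2
  have hf : Summable (fun K : ℕ => (K:ℝ) * Real.exp (-(d * Real.sqrt K))) := by
    have hg : Summable (fun K : ℕ => 1/((K:ℝ))^2) := summable_one_div_nat_pow.2 one_lt_two
    apply summable_of_isBigO_nat hg
    rw [Asymptotics.isBigO_iff]
    refine ⟨1/d^6, ?_⟩
    have ht : Tendsto (fun K : ℕ => d * Real.sqrt K) atTop atTop :=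
      Tendsto.const_mul_atTop hd hsqrt_tendsto
    have h0 : Tendsto (fun K : ℕ => (d * Real.sqrt K)^6 * Real.exp (-(d * Real.sqrt K)))
        atTop (nhds 0) := (tendsto_pow_mul_exp_neg_atTop_nhds_zero 6).comp ht
    filter_upwards [h0.eventually_lt_const one_pos, eventually_ge_atTop 1] with K hK hK1
    have hKpos : (0:ℝ) < K := by exact_mod_cast hK1
    have hsq : Real.sqrt K ^ 2 = (K:ℝ) := Real.sq_sqrt hKpos.le
    have hexp_pos : 0 < Real.exp (-(d * Real.sqrt K)) := Real.exp_pos _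
    rw [Real.norm_eq_abs, Real.norm_eq_abs, abs_of_nonneg (by positivity),
      abs_of_nonneg (by positivity)]
    have h6 : (d * Real.sqrt K)^6 = d^6 * (K:ℝ)^3 := by
      rw [mul_pow, show (Real.sqrt K)^6 = ((Real.sqrt K)^2)^3 by ring, hsq]
    rw [h6] at hK
    rw [div_mul_div_comm, one_mul, le_div_iff₀ (by positivity)]
    calc (K:ℝ) * Real.exp (-(d * Real.sqrt K)) * (d^6 * (K:ℝ)^2)
        = d^6 * (K:ℝ)^3 * Real.exp (-(d * Real.sqrt K)) := by ring
      _ ≤ 1 := hK.le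
  have h1 : ∀ K : ℕ, (K : ℝ≥0∞) * ENNReal.ofReal (Real.exp (-(d * Real.sqrt K)))
      = ENNReal.ofReal ((K:ℝ) * Real.exp (-(d * Real.sqrt K))) := by
    intro K
    rw [ENNReal.ofReal_mul (by positivity), ENNReal.ofReal_natCast]
  simp_rw [h1]
  rw [← ENNReal.ofReal_tsum_of_nonneg (fun K => by positivity) hf]
  exact ENNReal.ofReal_ne_top

lemma tail_bound {Ω : Type*} [MeasureSpace Ω] [IsProbabilityMeasure (ℙ : Measure Ω)]
    (a c : ℝ) (ha : 0 < a) (hc : 0 < c)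
    (nk : ℕ → ℕ) (hnk : ∀ k, 1 ≤ k → k ≤ nk k)
    (T : ℕ → Ω → ℝ) (hTmeas : ∀ k, Measurable (T k))
    (hlaw : ∀ k, 1 ≤ k →
      Measure.map (T k) ℙ =
        Measure.map (fun x : Fin k → ℝ => ∑ i, x i)
          (Measure.pi (fun i : Fin k =>
            expMeasure (a * (1 + (i : ℝ) * c) * ((nk k : ℝ) - (i : ℝ))))))
    (ε : ℝ) (hε : 0 < ε) (k : ℕ) (hk : 1 ≤ k) :
    ℙ {ω | ε < |T k ω|} ≤ (k : ℝ≥0∞) *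
      ENNReal.ofReal (Real.exp (-(ε * (a * min 1 c) / 4 * Real.sqrt k))) := by
  have hmeas_abs : MeasurableSet {x : ℝ | ε < |x|} :=
    measurableSet_lt measurable_const measurable_abs
  have h1 : ℙ {ω | ε < |T k ω|} = Measure.map (T k) ℙ {x | ε < |x|} :=
    (Measure.map_apply (hTmeas k) hmeas_abs).symm
  rw [h1, hlaw k hk]
  set r : Fin k → ℝ := fun i => a * (1 + (i:ℝ)*c) * ((nk k:ℝ) - (i:ℝ)) with hrdef
  have hb0 : (0:ℝ) < min 1 c := lt_min one_pos hc
  have hk0 : (0:ℝ) < k := by exact_mod_cast hk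
  have hsqrtk : 0 < Real.sqrt k := Real.sqrt_pos.2 hk0
  have hik : ∀ i : Fin k, (i:ℝ) + 1 ≤ (k:ℝ) := by
    intro i
    have := Nat.succ_le_of_lt i.isLt
    exact_mod_cast this
  have hki : ∀ i : Fin k, (0:ℝ) < (k:ℝ) - (i:ℝ) := fun i => by have := hik i; linarith
  have hnkk : (k:ℝ) ≤ (nk k:ℝ) := by exact_mod_cast hnk k hk
  have hr_pos : ∀ i, 0 < r i := by
    intro i
    have hi0 : (0:ℝ) ≤ (i:ℝ) := by positivity
    have h1 : (0:ℝ) < 1 + (i:ℝ)*c := by nlinarith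
    have h2 : (0:ℝ) < (nk k:ℝ) - (i:ℝ) := by have := hki i; linarith
    exact mul_pos (mul_pos ha h1) h2
  set u : Fin k → ℝ := fun i => 1/(((i:ℝ)+1) * ((k:ℝ)-(i:ℝ))) with hudef
  have hu_pos : ∀ i, 0 < u i := by
    intro i
    have h : (0:ℝ) < ((i:ℝ)+1) * ((k:ℝ)-(i:ℝ)) := mul_pos (by positivity) (hki i)
    simpa [hudef] using one_div_pos.2 h
  set U := ∑ i, u i with hUdef
  haveI : Nonempty (Fin k) := Fin.pos_iff_nonempty.1 hk
  have hU_pos : 0 < U := Finset.sum_pos (fun i _ => hu_pos i) Finset.univ_nonempty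
  have hUle : U ≤ 4 / Real.sqrt k := by
    have hsum1 : ∑ i : Fin k, (1:ℝ)/((i:ℝ)+1) ≤ 2 * Real.sqrt k := by
      rw [Fin.sum_univ_eq_sum_range (fun i => (1:ℝ)/((i:ℝ)+1)) k]
      exact sum_one_div_le_sqrt k
    have hsum2 : ∑ i : Fin k, (1:ℝ)/((k:ℝ)-(i:ℝ)) ≤ 2 * Real.sqrt k := by
      rw [Fin.sum_univ_eq_sum_range (fun i => (1:ℝ)/((k:ℝ)-(i:ℝ))) k]
      have hre := Finset.sum_range_reflect (fun j => (1:ℝ)/((k:ℝ) - (j:ℝ))) k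
      rw [← hre]
      have hcongr : ∀ j ∈ Finset.range k,
          (1:ℝ)/((k:ℝ) - ((k - 1 - j : ℕ):ℝ)) = (1:ℝ)/((j:ℝ)+1) := by
        intro j hj
        have hjk : j < k := Finset.mem_range.1 hj
        congr 1
        have hnat : (k - 1 - j : ℕ) = k - (j+1) := by omega
        rw [hnat, Nat.cast_sub (by omega)]
        push_cast
        ring
      rw [Finset.sum_congr rfl hcongr]
      exact sum_one_div_le_sqrt k
    have hUeq : U ≤ (1/((k:ℝ)+1)) *
        (∑ i : Fin k, (1:ℝ)/((i:ℝ)+1) + ∑ i : Fin k, (1:ℝ)/((k:ℝ)-(i:ℝ))) := by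
      have hpf : ∀ i : Fin k,
          u i = (1/((k:ℝ)+1)) * ((1:ℝ)/((i:ℝ)+1) + 1/((k:ℝ)-(i:ℝ))) := by
        intro i
        have h1 : ((i:ℝ)+1) ≠ 0 := by positivity
        have h2 : ((k:ℝ)-(i:ℝ)) ≠ 0 := ne_of_gt (hki i)
        have h3 : ((k:ℝ)+1) ≠ 0 := by positivity
        simp only [hudef]
        field_simp
        ring
      rw [hUdef, Finset.sum_congr rfl (fun i _ => hpf i), ← Finset.mul_sum,
        Finset.sum_add_distrib]
    have hsq : Real.sqrt k ^ 2 = (k:ℝ) := Real.sq_sqrt hk0.le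
    calc U ≤ _ := hUeq
      _ ≤ (1/((k:ℝ)+1)) * (2*Real.sqrt k + 2*Real.sqrt k) :=
          mul_le_mul_of_nonneg_left (add_le_add hsum1 hsum2) (by positivity)
      _ ≤ 4 / Real.sqrt k := by
          rw [div_mul_eq_mul_div, one_mul, div_le_div_iff₀ (by positivity) hsqrtk]
          nlinarith [hsq, hsqrtk]
  set w : Fin k → ℝ := fun i => u i / U with hwdef
  have hw : ∀ i, 0 ≤ w i := fun i => div_nonneg (hu_pos i).le hU_pos.le
  have hw1 : ∑ i, w i = 1 := by
    simp only [hwdef]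
    rw [← Finset.sum_div, ← hUdef, div_self (ne_of_gt hU_pos)]
  apply pi_sum_tail r hr_pos w hw hw1 ε hε
  intro i
  have hrlow : a * min 1 c * (((i:ℝ)+1) * ((k:ℝ)-(i:ℝ))) ≤ r i := by
    have hb1 : min 1 c ≤ 1 := min_le_left _ _
    have hbc : min 1 c ≤ c := min_le_right _ _
    have hi0 : (0:ℝ) ≤ (i:ℝ) := by positivity
    have h1 : min 1 c * ((i:ℝ)+1) ≤ 1 + (i:ℝ)*c := by nlinarith
    have h2 : (k:ℝ)-(i:ℝ) ≤ (nk k:ℝ)-(i:ℝ) := by linarith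
    have hic : (0:ℝ) < 1 + (i:ℝ)*c := by nlinarith
    calc a * min 1 c * (((i:ℝ)+1) * ((k:ℝ)-(i:ℝ)))
        = a * (min 1 c * ((i:ℝ)+1)) * ((k:ℝ)-(i:ℝ)) := by ring
      _ ≤ a * (1 + (i:ℝ)*c) * ((k:ℝ)-(i:ℝ)) :=
          mul_le_mul_of_nonneg_right (mul_le_mul_of_nonneg_left h1 ha.le) (hki i).le
      _ ≤ a * (1 + (i:ℝ)*c) * ((nk k:ℝ)-(i:ℝ)) :=
          mul_le_mul_of_nonneg_left h2 (mul_pos ha hic).le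
      _ = r i := by rw [hrdef]
  have hui : (((i:ℝ)+1) * ((k:ℝ)-(i:ℝ))) * u i = 1 := by
    have h1 : ((i:ℝ)+1) ≠ 0 := by positivity
    have h2 : ((k:ℝ)-(i:ℝ)) ≠ 0 := ne_of_gt (hki i)
    simp only [hudef]
    field_simp
  have hUinv : Real.sqrt k / 4 ≤ 1 / U := by
    rw [div_le_div_iff₀ (by norm_num) hU_pos]
    have hmul := mul_le_mul_of_nonneg_left hUle hsqrtk.le
    have h4 : Real.sqrt k * (4 / Real.sqrt k) = 4 := by field_simp
    linarith
  have e2 : a * min 1 c ≤ r i * u i := by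
    calc a * min 1 c
        = a * min 1 c * ((((i:ℝ)+1) * ((k:ℝ)-(i:ℝ))) * u i) := by rw [hui]; ring
      _ = a * min 1 c * (((i:ℝ)+1) * ((k:ℝ)-(i:ℝ))) * u i := by ring
      _ ≤ r i * u i := mul_le_mul_of_nonneg_right hrlow (hu_pos i).le
  calc ε * (a * min 1 c) / 4 * Real.sqrt k
      = (a * min 1 c) * ε * (Real.sqrt k / 4) := by ring
    _ ≤ (a * min 1 c) * ε * (1 / U) :=
        mul_le_mul_of_nonneg_left hUinv (by positivity)
    _ = (a * min 1 c) * ε / U := by ring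
    _ ≤ (r i * u i) * ε / U := by gcongr
    _ = r i * (ε * w i) := by simp only [hwdef]; ring

end LastDefaultAux

/-- If for each `k ≥ 1` the random variable `T k` has the law of a sum of `k` independent
exponential random variables with rates `a(1+ic)(n_k - i)`, `i = 0,…,k-1`, where `n_k ≥ k`,
then `T k → 0` almost surely as `k → ∞`.  (In particular, with `n_k = k`, the
last-to-default time `τ^n(n)` tends to `0` almost surely as `n → ∞`.) -/
theorem last_default_time_tendsto_zero
    {Ω : Type*} [MeasureSpace Ω] [IsProbabilityMeasure (ℙ : Measure Ω)]
    (a c : ℝ) (ha : 0 < a) (hc : 0 < c)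
    (nk : ℕ → ℕ) (hnk : ∀ k, 1 ≤ k → k ≤ nk k)
    (T : ℕ → Ω → ℝ) (hTmeas : ∀ k, Measurable (T k))
    (hlaw : ∀ k, 1 ≤ k →
      Measure.map (T k) ℙ =
        Measure.map (fun x : Fin k → ℝ => ∑ i, x i)
          (Measure.pi (fun i : Fin k =>
            expMeasure (a * (1 + (i : ℝ) * c) * ((nk k : ℝ) - (i : ℝ)))))) :
    ∀ᵐ ω ∂(ℙ : Measure Ω), Tendsto (fun k => T k ω) atTop (nhds 0) := by
  have key : ∀ m : ℕ, ∀ᵐ ω ∂(ℙ : Measure Ω),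
      ∀ᶠ k in atTop, |T (k+1) ω| ≤ 1/((m:ℝ)+1) := by
    intro m
    have hε : (0:ℝ) < 1/((m:ℝ)+1) := by positivity
    have hd0 : (0:ℝ) < 1/((m:ℝ)+1) * (a * min 1 c) / 4 := by
      have := lt_min one_pos hc
      positivity
    set s : ℕ → Set Ω := fun k => {ω | 1/((m:ℝ)+1) < |T (k+1) ω|} with hs
    have hbound : ∀ k, ℙ (s k) ≤ ((k+1 : ℕ) : ℝ≥0∞) *
        ENNReal.ofReal (Real.exp (-(1/((m:ℝ)+1) * (a * min 1 c) / 4 * Real.sqrt ((k+1 : ℕ))))) :=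
      fun k => LastDefaultAux.tail_bound a c ha hc nk hnk T hTmeas hlaw _ hε (k+1)
        (Nat.le_add_left 1 k)
    have hsum : (∑' k, ℙ (s k)) ≠ ⊤ := by
      have hle : (∑' k, ℙ (s k)) ≤
          ∑' K : ℕ, (K : ℝ≥0∞) * ENNReal.ofReal
            (Real.exp (-(1/((m:ℝ)+1) * (a * min 1 c) / 4 * Real.sqrt K))) := by
        calc (∑' k, ℙ (s k)) ≤ ∑' k : ℕ, ((k+1 : ℕ) : ℝ≥0∞) * ENNReal.ofReal
              (Real.exp (-(1/((m:ℝ)+1) * (a * min 1 c) / 4 * Real.sqrt ((k+1 : ℕ))))) :=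
            ENNReal.tsum_le_tsum hbound
          _ ≤ _ := by
            have hinj : Function.Injective (fun k : ℕ => k + 1) := fun x y h => by
              simpa using h
            exact ENNReal.tsum_comp_le_tsum_of_injective hinj _
      exact ne_top_of_le_ne_top (LastDefaultAux.summable_aux _ hd0) hle
    filter_upwards [ae_eventually_notMem hsum] with ω hω
    filter_upwards [hω] with k hk
    exact not_lt.1 hk
  filter_upwards [ae_all_iff.2 key] with ω hω
  apply (tendsto_add_atTop_iff_nat 1).mp
  rw [NormedAddCommGroup.tendsto_nhds_zero]
  intro ε' hε'
  obtain ⟨m, hm⟩ := exists_nat_one_div_lt hε'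
  filter_upwards [hω m] with k hk
  rw [Real.norm_eq_abs]
  exact lt_of_le_of_lt hk hm
end

section
/- For every a > 0, c > 0 and every integer k ≥ 1, Σ_{i=0}^{k−1} 1/(a(1+ic)(k−i)) < ((2c+2)/(a(ck+1))) · ( 1 + (1/c)·ln(1+ck) ). -/
/-- Harmonic sum bound: `Σ_{i<k} 1/(i+1) ≤ 1 + log k` for `k ≥ 1`. -/
lemma harm_le_log (k : ℕ) (hk : 1 ≤ k) :
    ∑ i ∈ Finset.range k, 1 / ((i : ℝ) + 1) ≤ 1 + Real.log k := by
  induction k with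
  | zero => omega
  | succ n ih =>
    rcases Nat.eq_or_lt_of_le hk with h | h
    · simp [← h]
    · have hn : 1 ≤ n := by omega
      have ihn := ih hn
      rw [Finset.sum_range_succ]
      have hnpos : (0:ℝ) < n := by exact_mod_cast hn
      have hkey : 1 / ((n : ℝ) + 1) ≤ Real.log (n + 1) - Real.log n := by
        have h1 : Real.log ((n : ℝ) / (n + 1)) ≤ (n : ℝ) / (n + 1) - 1 :=
          Real.log_le_sub_one_of_pos (by positivity)
        have h2 : Real.log ((n : ℝ) / (n + 1)) = Real.log n - Real.log (n + 1) :=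
          Real.log_div (by positivity) (by positivity)
        have h3 : (n : ℝ) / (n + 1) - 1 = -(1 / ((n : ℝ) + 1)) := by
          field_simp
          ring
        rw [h2, h3] at h1
        linarith
      push_cast
      linarith

/-- `log k ≤ (1 + 1/c) log (1 + c k)` for `c > 0`, `k ≥ 1`. -/
lemma log_le_aux (c : ℝ) (hc : 0 < c) (k : ℕ) (hk : 1 ≤ k) :
    Real.log k ≤ (1 + 1 / c) * Real.log (1 + c * k) := by
  have hk1 : (1:ℝ) ≤ k := by exact_mod_cast hk
  have hlogk : 0 ≤ Real.log k := Real.log_nonneg hk1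
  have hck : (1:ℝ) ≤ 1 + c * k := by nlinarith
  have hlogck : 0 ≤ Real.log (1 + c * k) := Real.log_nonneg hck
  rcases le_or_gt c 1 with h1 | h1
  · -- concavity: log(1+ck) ≥ c log(1+k) ≥ c log k
    have hconc := (strictConcaveOn_log_Ioi.concaveOn).2
      (Set.mem_Ioi.2 (zero_lt_one (α := ℝ)))
      (Set.mem_Ioi.2 (show (0:ℝ) < 1 + (k:ℝ) by positivity))
      (show (0:ℝ) ≤ 1 - c by linarith) (le_of_lt hc) (by ring)
    simp only [smul_eq_mul, Real.log_one, mul_zero, zero_add] at hconc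
    have he : ((1 - c) * 1 + c * (1 + (k:ℝ))) = 1 + c * k := by ring
    rw [he] at hconc
    have h2 : Real.log k ≤ Real.log (1 + (k:ℝ)) :=
      Real.log_le_log (by positivity) (by linarith)
    have h3 : c * Real.log k ≤ Real.log (1 + c * k) := by nlinarith
    have h4 : Real.log k ≤ (1 / c) * Real.log (1 + c * k) := by
      rw [← sub_nonneg] at h3 ⊢
      have hdiv := div_nonneg h3 (le_of_lt hc)
      have : (Real.log (1 + c * k) - c * Real.log k) / c
          = 1 / c * Real.log (1 + c * k) - Real.log k := by
        field_simp
      linarith [this ▸ hdiv]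
    nlinarith
  · have h2 : Real.log k ≤ Real.log (1 + c * k) :=
      Real.log_le_log (by positivity) (by nlinarith)
    have h3 : 0 ≤ (1/c) * Real.log (1 + c*k) := by positivity
    nlinarith

/-- Key estimate: for `a > 0`, `c > 0` and `k ≥ 1`,
`Σ_{i=0}^{k-1} 1/(a(1+ic)(k-i)) < ((2c+2)/(a(ck+1))) (1 + (1/c) ln(1+ck))`. -/
theorem sum_mean_bound
    (a c : ℝ) (ha : 0 < a) (hc : 0 < c) (k : ℕ) (hk : 1 ≤ k) :
    ∑ i ∈ Finset.range k, 1 / (a * (1 + (i : ℝ) * c) * ((k : ℝ) - (i : ℝ))) <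
      ((2 * c + 2) / (a * (c * (k : ℝ) + 1))) * (1 + (1 / c) * Real.log (1 + c * (k : ℝ))) := by
  have hk1 : (1:ℝ) ≤ k := by exact_mod_cast hk
  have hckpos : (0:ℝ) < 1 + c * k := by nlinarith
  -- per-term identity
  have hterm : ∀ i ∈ Finset.range k,
      1 / (a * (1 + (i : ℝ) * c) * ((k : ℝ) - (i : ℝ)))
        = (1 / (a * (1 + c * k))) * (c / (1 + (i:ℝ) * c) + 1 / ((k:ℝ) - i)) := by
    intro i hi
    have hik : i < k := Finset.mem_range.1 hi
    have h1 : (0:ℝ) < 1 + (i:ℝ) * c := by positivity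
    have h2 : (0:ℝ) < (k:ℝ) - i := by
      have : (i:ℝ) < k := by exact_mod_cast hik
      linarith
    field_simp
    ring
  rw [Finset.sum_congr rfl hterm, ← Finset.mul_sum, Finset.sum_add_distrib]
  -- second sum is the harmonic sum
  have hrefl : ∑ i ∈ Finset.range k, 1 / ((k:ℝ) - i)
      = ∑ i ∈ Finset.range k, 1 / ((i:ℝ) + 1) := by
    rw [← Finset.sum_range_reflect (fun i => 1 / ((i:ℝ) + 1)) k]
    apply Finset.sum_congr rfl
    intro i hi
    have hik : i < k := Finset.mem_range.1 hi
    have hcast : ((k - 1 - i : ℕ) : ℝ) = (k:ℝ) - 1 - i := by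
      have hh : k - 1 - i + (i + 1) = k := by omega
      have := congrArg (fun n : ℕ => (n:ℝ)) hh
      push_cast at this
      linarith
    rw [hcast]
    ring_nf
  rw [hrefl]
  have hH := harm_le_log k hk
  set H := ∑ i ∈ Finset.range k, 1 / ((i : ℝ) + 1) with hHdef
  have hHpos : 0 ≤ H := by
    rw [hHdef]; positivity
  -- first sum bound: ≤ c + H
  have hfirst : ∑ i ∈ Finset.range k, c / (1 + (i:ℝ) * c) ≤ c + H := by
    obtain ⟨m, rfl⟩ : ∃ m, k = m + 1 := ⟨k - 1, by omega⟩
    rw [Finset.sum_range_succ']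
    have h1 : ∑ i ∈ Finset.range m, c / (1 + ((i + 1 : ℕ):ℝ) * c)
        ≤ ∑ i ∈ Finset.range m, 1 / ((i:ℝ) + 1) := by
      apply Finset.sum_le_sum
      intro i _
      have hi0 : (0:ℝ) ≤ i := Nat.cast_nonneg i
      push_cast
      rw [div_le_div_iff₀ (by positivity) (by positivity)]
      nlinarith
    have h2 : ∑ i ∈ Finset.range m, 1 / ((i:ℝ) + 1) ≤ H := by
      rw [hHdef]
      apply Finset.sum_le_sum_of_subset_of_nonneg (Finset.range_subset_range.2 (by omega))
      intro i _ _
      positivity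
    have h0 : c / (1 + ((0:ℕ):ℝ) * c) = c := by norm_num
    rw [h0]
    linarith
  -- log facts
  have hlog := log_le_aux c hc k hk
  have hlogk : 0 ≤ Real.log k := Real.log_nonneg hk1
  have hlogck : 0 ≤ Real.log (1 + c * k) := Real.log_nonneg (by nlinarith)
  have hmulpos : (0:ℝ) < 1 / (a * (1 + c * k)) := by positivity
  have hT : (∑ i ∈ Finset.range k, c / (1 + (i:ℝ) * c)) + H
      < (2 * c + 2) * (1 + (1 / c) * Real.log (1 + c * k)) := by
    have hb3 : 2 * Real.log k ≤ (2 + 2 / c) * Real.log (1 + c * k) := by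
      have he : (2 + 2 / c) * Real.log (1 + c * k)
          = 2 * ((1 + 1 / c) * Real.log (1 + c * k)) := by ring
      rw [he]
      linarith
    have hrhs : (2 * c + 2) * (1 + (1 / c) * Real.log (1 + c * k))
        = 2 * c + 2 + (2 + 2 / c) * Real.log (1 + c * k) := by
      field_simp
    rw [hrhs]
    linarith
  calc (1 / (a * (1 + c * k))) * ((∑ i ∈ Finset.range k, c / (1 + (i:ℝ) * c)) + H)
      < (1 / (a * (1 + c * k))) * ((2 * c + 2) * (1 + (1 / c) * Real.log (1 + c * k))) :=
        mul_lt_mul_of_pos_left hT hmulpos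
    _ = ((2 * c + 2) / (a * (c * (k : ℝ) + 1))) * (1 + (1 / c) * Real.log (1 + c * (k : ℝ))) := by
        rw [div_mul_eq_mul_div, one_div, inv_mul_eq_div]
        ring_nf
end

section
/- Let a > 0, c > 0 and integers 1 ≤ k ≤ n. Then Σ_{i=0}^{k−1} 1/(a(1+ic)(n−i))^2 < ((2c+2)/(a(ck+1)))^2 · Σ_{i=0}^{∞} 1/(1+ic)^2, and the series Σ_{i=0}^{∞} 1/(1+ic)^2 converges. -/
/-- Variance bound: for `a, c > 0` and `1 ≤ k ≤ n`,
`Σ_{i<k} (1/(a(1+ic)(n-i)))² < ((2c+2)/(a(ck+1)))² Σ_{i=0}^∞ 1/(1+ic)²`,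
and the series `Σ_{i=0}^∞ 1/(1+ic)²` converges. -/
theorem variance_bound_and_summable
    (a c : ℝ) (ha : 0 < a) (hc : 0 < c) (k n : ℕ) (hk : 1 ≤ k) (hkn : k ≤ n) :
    (∑ i ∈ Finset.range k, (1 / (a * (1 + (i : ℝ) * c) * ((n : ℝ) - (i : ℝ)))) ^ 2 <
        ((2 * c + 2) / (a * (c * (k : ℝ) + 1))) ^ 2 *
          ∑' i : ℕ, 1 / (1 + (i : ℝ) * c) ^ 2) ∧
      Summable (fun i : ℕ => 1 / (1 + (i : ℝ) * c) ^ 2) := by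
  have hpos : ∀ i : ℕ, (0:ℝ) < 1 + (i:ℝ) * c := by
    intro i
    have : (0:ℝ) ≤ (i:ℝ) := Nat.cast_nonneg i
    nlinarith
  have hfnn : ∀ i : ℕ, (0:ℝ) ≤ 1 / (1 + (i:ℝ) * c) ^ 2 := by
    intro i; positivity
  -- Summability
  have hshiftsum : Summable (fun i : ℕ => 1 / ((i:ℝ) + 1) ^ 2) := by
    have h2 : Summable (fun i : ℕ => 1 / (i:ℝ) ^ 2) :=
      Real.summable_one_div_nat_pow.2 one_lt_two
    have := (summable_nat_add_iff 1).2 h2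
    refine this.congr ?_
    intro i; push_cast; ring
  have hsum : Summable (fun i : ℕ => 1 / (1 + (i : ℝ) * c) ^ 2) := by
    refine Summable.of_nonneg_of_le hfnn ?_ (hshiftsum.mul_left (((1+c)/c)^2))
    intro i
    have hi0 : (0:ℝ) ≤ (i:ℝ) := Nat.cast_nonneg i
    have h1 : 1 / ((i:ℝ) + 1) ≤ ((1+c)/c) / ((i:ℝ) + 1) ∨ True := Or.inr trivial
    have hkey : 1 / (1 + (i:ℝ) * c) ≤ ((1+c)/c) / ((i:ℝ) + 1) := by
      rw [div_le_div_iff₀ (hpos i) (by positivity)]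
      rw [div_mul_eq_mul_div, le_div_iff₀ hc]
      nlinarith [mul_nonneg (mul_nonneg hi0 hc.le) hc.le]
    have hsq := pow_le_pow_left₀ (by positivity) hkey 2
    calc 1 / (1 + (i:ℝ) * c) ^ 2 = (1 / (1 + (i:ℝ) * c)) ^ 2 := by rw [div_pow, one_pow]
      _ ≤ (((1+c)/c) / ((i:ℝ) + 1)) ^ 2 := hsq
      _ = ((1+c)/c)^2 * (1 / ((i:ℝ) + 1) ^ 2) := by rw [div_pow, mul_one_div]
  set S := ∑' i : ℕ, 1 / (1 + (i:ℝ) * c) ^ 2 with hS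
  have hS1 : 1 ≤ S := by
    have h0 : (1:ℝ) / (1 + (0:ℕ) * c) ^ 2 ≤ S :=
      Summable.le_tsum hsum 0 (fun j _ => hfnn j)
    simpa using h0
  have hck : (0:ℝ) < 1 + c * k := by
    have : (0:ℝ) ≤ (k:ℝ) := Nat.cast_nonneg k
    nlinarith
  -- bound for the reflected sum
  have hSg : ∑ i ∈ Finset.range k, 1 / (c * ((k:ℝ) - i)) ^ 2 ≤ ((1+c)/c)^2 * (S - 1) := by
    have hrefl : ∑ i ∈ Finset.range k, 1 / (c * ((k:ℝ) - i)) ^ 2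
        = ∑ j ∈ Finset.range k, 1 / (c * ((j:ℝ) + 1)) ^ 2 := by
      rw [← Finset.sum_range_reflect (fun j => 1 / (c * ((j:ℝ) + 1)) ^ 2) k]
      refine Finset.sum_congr rfl ?_
      intro j hj
      have hjk : j < k := Finset.mem_range.1 hj
      have h1 : ((k - 1 - j : ℕ) : ℝ) = (k:ℝ) - 1 - (j:ℝ) := by
        have : k - 1 - j = k - (j + 1) := by omega
        rw [this, Nat.cast_sub (by omega)]
        push_cast; ring
      rw [h1]; ring_nf
    rw [hrefl]
    have hterm : ∀ j ∈ Finset.range k,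
        1 / (c * ((j:ℝ) + 1)) ^ 2 ≤ ((1+c)/c)^2 * (1 / (1 + ((j:ℝ) + 1) * c) ^ 2) := by
      intro j _
      have hj0 : (0:ℝ) ≤ (j:ℝ) := Nat.cast_nonneg j
      have hkey : 1 / (c * ((j:ℝ) + 1)) ≤ ((1+c)/c) / (1 + ((j:ℝ) + 1) * c) := by
        rw [div_le_div_iff₀ (by positivity) (by positivity)]
        rw [div_mul_eq_mul_div, le_div_iff₀ hc]
        nlinarith
      have hsq := pow_le_pow_left₀ (by positivity) hkey 2
      calc 1 / (c * ((j:ℝ) + 1)) ^ 2 = (1 / (c * ((j:ℝ) + 1))) ^ 2 := by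
            rw [div_pow, one_pow]
        _ ≤ (((1+c)/c) / (1 + ((j:ℝ) + 1) * c)) ^ 2 := hsq
        _ = ((1+c)/c)^2 * (1 / (1 + ((j:ℝ) + 1) * c) ^ 2) := by rw [div_pow, mul_one_div]
    have hshift : ∑ j ∈ Finset.range k, 1 / (1 + ((j:ℝ) + 1) * c) ^ 2 ≤ S - 1 := by
      have hfull : ∑ i ∈ Finset.range (k+1), 1 / (1 + (i:ℝ) * c) ^ 2 ≤ S :=
        Summable.sum_le_tsum _ (fun i _ => hfnn i) hsum
      have hsucc := Finset.sum_range_succ' (fun i : ℕ => 1 / (1 + (i:ℝ) * c) ^ 2) k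
      have hcast : ∀ j : ℕ, 1 / (1 + ((j+1 : ℕ):ℝ) * c) ^ 2 = 1 / (1 + ((j:ℝ) + 1) * c) ^ 2 := by
        intro j; push_cast; ring_nf
      simp only [hcast] at hsucc
      have : ∑ j ∈ Finset.range k, 1 / (1 + ((j:ℝ) + 1) * c) ^ 2 + 1 / (1 + (0:ℝ) * c) ^ 2 ≤ S := by
        rw [show ((0:ℕ):ℝ) = (0:ℝ) by norm_num] at hsucc
        rw [← hsucc]; exact hfull
      have h0 : (1:ℝ) / (1 + (0:ℝ) * c) ^ 2 = 1 := by norm_num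
      linarith [this, h0.symm ▸ this]
    calc ∑ j ∈ Finset.range k, 1 / (c * ((j:ℝ) + 1)) ^ 2
        ≤ ∑ j ∈ Finset.range k, ((1+c)/c)^2 * (1 / (1 + ((j:ℝ) + 1) * c) ^ 2) :=
          Finset.sum_le_sum hterm
      _ = ((1+c)/c)^2 * ∑ j ∈ Finset.range k, 1 / (1 + ((j:ℝ) + 1) * c) ^ 2 := by
          rw [Finset.mul_sum]
      _ ≤ ((1+c)/c)^2 * (S - 1) := by
          apply mul_le_mul_of_nonneg_left hshift (by positivity)
  -- pointwise bound on original terms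
  have hterm : ∀ i ∈ Finset.range k,
      (1 / (a * (1 + (i:ℝ) * c) * ((n:ℝ) - (i:ℝ)))) ^ 2 ≤
        2 * (c / (a * (1 + c * k))) ^ 2 *
          (1 / (1 + (i:ℝ) * c) ^ 2 + 1 / (c * ((k:ℝ) - i)) ^ 2) := by
    intro i hi
    have hik : i < k := Finset.mem_range.1 hi
    have h1 : (1:ℝ) ≤ (k:ℝ) - i := by
      have : (i:ℝ) + 1 ≤ (k:ℝ) := by exact_mod_cast hik
      linarith
    have h2 : (k:ℝ) - i ≤ (n:ℝ) - i := by
      have : (k:ℝ) ≤ (n:ℝ) := by exact_mod_cast hkn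
      linarith
    have hXpos : (0:ℝ) < a * (1 + (i:ℝ) * c) * ((k:ℝ) - i) := by
      have := hpos i; positivity
    have hXY : a * (1 + (i:ℝ) * c) * ((k:ℝ) - i) ≤ a * (1 + (i:ℝ) * c) * ((n:ℝ) - i) := by
      have h3 : (0:ℝ) ≤ a * (1 + (i:ℝ) * c) := le_of_lt (by have := hpos i; positivity)
      exact mul_le_mul_of_nonneg_left h2 h3
    have hdiv : 1 / (a * (1 + (i:ℝ) * c) * ((n:ℝ) - i)) ≤
        1 / (a * (1 + (i:ℝ) * c) * ((k:ℝ) - i)) :=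
      one_div_le_one_div_of_le hXpos hXY
    have hYpos : (0:ℝ) < a * (1 + (i:ℝ) * c) * ((n:ℝ) - i) := lt_of_lt_of_le hXpos hXY
    have hA : (1 / (a * (1 + (i:ℝ) * c) * ((n:ℝ) - i))) ^ 2 ≤
        (1 / (a * (1 + (i:ℝ) * c) * ((k:ℝ) - i))) ^ 2 := by
      apply pow_le_pow_left₀ (one_div_nonneg.2 hYpos.le) hdiv
    have hid : 1 / (a * (1 + (i:ℝ) * c) * ((k:ℝ) - i)) =
        (c / (a * (1 + c * k))) * (1 / (1 + (i:ℝ) * c) + 1 / (c * ((k:ℝ) - i))) := by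
      have hki : (k:ℝ) - i ≠ 0 := by linarith
      have hic : (1:ℝ) + (i:ℝ) * c ≠ 0 := ne_of_gt (hpos i)
      have hcc : (1:ℝ) + c * k ≠ 0 := ne_of_gt hck
      field_simp
      ring
    have hB : (1 / (a * (1 + (i:ℝ) * c) * ((k:ℝ) - i))) ^ 2 ≤
        2 * (c / (a * (1 + c * k))) ^ 2 *
          (1 / (1 + (i:ℝ) * c) ^ 2 + 1 / (c * ((k:ℝ) - i)) ^ 2) := by
      rw [hid, mul_pow]
      set u := 1 / (1 + (i:ℝ) * c) with hu
      set v := 1 / (c * ((k:ℝ) - i)) with hv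
      have huv : (u + v) ^ 2 ≤ 2 * (u ^ 2 + v ^ 2) := by nlinarith [sq_nonneg (u - v)]
      have hC : (0:ℝ) ≤ (c / (a * (1 + c * k))) ^ 2 := sq_nonneg _
      have hu2 : u ^ 2 = 1 / (1 + (i:ℝ) * c) ^ 2 := by rw [hu, div_pow, one_pow]
      have hv2 : v ^ 2 = 1 / (c * ((k:ℝ) - i)) ^ 2 := by rw [hv, div_pow, one_pow]
      calc (c / (a * (1 + c * k))) ^ 2 * (u + v) ^ 2
          ≤ (c / (a * (1 + c * k))) ^ 2 * (2 * (u ^ 2 + v ^ 2)) :=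
            mul_le_mul_of_nonneg_left huv hC
        _ = 2 * (c / (a * (1 + c * k))) ^ 2 * (u ^ 2 + v ^ 2) := by ring
        _ = 2 * (c / (a * (1 + c * k))) ^ 2 *
              (1 / (1 + (i:ℝ) * c) ^ 2 + 1 / (c * ((k:ℝ) - i)) ^ 2) := by rw [hu2, hv2]
    exact le_trans hA hB
  -- combine
  have hSf : ∑ i ∈ Finset.range k, 1 / (1 + (i:ℝ) * c) ^ 2 ≤ S :=
    Summable.sum_le_tsum _ (fun i _ => hfnn i) hsum
  have hmain : ∑ i ∈ Finset.range k, (1 / (a * (1 + (i:ℝ) * c) * ((n:ℝ) - (i:ℝ)))) ^ 2 ≤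
      2 * (c / (a * (1 + c * k))) ^ 2 * (S + ((1+c)/c)^2 * (S - 1)) := by
    calc ∑ i ∈ Finset.range k, (1 / (a * (1 + (i:ℝ) * c) * ((n:ℝ) - (i:ℝ)))) ^ 2
        ≤ ∑ i ∈ Finset.range k, 2 * (c / (a * (1 + c * k))) ^ 2 *
            (1 / (1 + (i:ℝ) * c) ^ 2 + 1 / (c * ((k:ℝ) - i)) ^ 2) :=
          Finset.sum_le_sum hterm
      _ = 2 * (c / (a * (1 + c * k))) ^ 2 *
            (∑ i ∈ Finset.range k, 1 / (1 + (i:ℝ) * c) ^ 2 +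
              ∑ i ∈ Finset.range k, 1 / (c * ((k:ℝ) - i)) ^ 2) := by
          rw [← Finset.mul_sum, Finset.sum_add_distrib]
      _ ≤ 2 * (c / (a * (1 + c * k))) ^ 2 * (S + ((1+c)/c)^2 * (S - 1)) := by
          apply mul_le_mul_of_nonneg_left (add_le_add hSf hSg) (by positivity)
  have hfin : 2 * (c / (a * (1 + c * k))) ^ 2 * (S + ((1+c)/c)^2 * (S - 1)) <
      ((2 * c + 2) / (a * (c * (k:ℝ) + 1))) ^ 2 * S := by
    have hD : (0:ℝ) < (a * (c * (k:ℝ) + 1)) ^ 2 := by positivity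
    have heq1 : 2 * (c / (a * (1 + c * k))) ^ 2 * (S + ((1+c)/c)^2 * (S - 1)) =
        (2 * (c ^ 2 * S + (1 + c) ^ 2 * (S - 1))) / (a * (c * (k:ℝ) + 1)) ^ 2 := by
      have hcc : (1:ℝ) + c * k ≠ 0 := ne_of_gt hck
      field_simp
      ring
    have heq2 : ((2 * c + 2) / (a * (c * (k:ℝ) + 1))) ^ 2 * S =
        ((2 * c + 2) ^ 2 * S) / (a * (c * (k:ℝ) + 1)) ^ 2 := by
      rw [div_pow]; ring
    have h0 : 2 * (c ^ 2 * S + (1 + c) ^ 2 * (S - 1)) < (2 * c + 2) ^ 2 * S := by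
      have hSpos : (0:ℝ) < S := lt_of_lt_of_le one_pos hS1
      nlinarith [mul_pos hc hSpos, mul_pos (mul_pos hc hc) hSpos]
    rw [heq1, heq2, div_lt_div_iff₀ hD hD]
    exact mul_lt_mul_of_pos_right h0 hD
  exact ⟨lt_of_le_of_lt hmain hfin, hsum⟩
end

section
/- Let n ≥ 2 be an integer, c ≥ 0 with c ≠ 1/i for every integer 1 ≤ i ≤ n−1, and let x : [0,∞) → (0,∞) be continuous. Define F(t) = ∫_0^t x(u) du, and define functions f_k recursively by f_1(t) = n x(t) e^{−n F(t)} and, for 1 ≤ k ≤ n−1, f_{k+1}(t) = (n−k)(1+kc) x(t) ∫_0^t f_k(u) e^{−(n−k)(1+kc)(F(t)−F(u))} du. Then for every 1 ≤ k ≤ n and t ≥ 0, f_k(t) = Σ_{j=0}^{k−1} α_{k,j} x(t) e^{−β_j F(t)}, where β_j = (n−j)(1+jc) and the coefficients satisfy α_{1,0} = n, α_{k+1,j} = α_{k,j} β_k/(β_k−β_j) for 0 ≤ j ≤ k−1, α_{k+1,k} = −Σ_{u=0}^{k−1} α_{k,u} β_k/(β_k−β_u). -/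
open MeasureTheory Real Set intervalIntegral
open scoped Topology

/-- Closed-form solution of the conditional density recursion in the homogeneous contagion
model with exogenous stochastic intensity: with `F t = ∫_0^t x(u) du`,
`f 1 t = n x(t) e^{-n F(t)}` and
`f (k+1) t = (n-k)(1+kc) x(t) ∫_0^t f k u e^{-(n-k)(1+kc)(F(t)-F(u))} du`,
one has `f k t = Σ_{j<k} α k j x(t) e^{-β j F(t)}` for `1 ≤ k ≤ n` and `t ≥ 0`. -/
theorem stochastic_intensity_density_closed_form
    (n : ℕ) (hn : 2 ≤ n) (c : ℝ) (hc : 0 ≤ c)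
    (hcne : ∀ i : ℕ, 1 ≤ i → i ≤ n - 1 → c ≠ 1 / (i : ℝ))
    (x : ℝ → ℝ) (hxcont : ContinuousOn x (Ici 0)) (hxpos : ∀ t, 0 ≤ t → 0 < x t)
    (F : ℝ → ℝ) (hF : ∀ t, F t = ∫ u in (0 : ℝ)..t, x u)
    (β : ℕ → ℝ) (hβ : ∀ j ≤ n - 1, β j = ((n : ℝ) - (j : ℝ)) * (1 + (j : ℝ) * c))
    (α : ℕ → ℕ → ℝ) (hα1 : α 1 0 = n)
    (hαrec : ∀ k, 1 ≤ k → k ≤ n - 1 →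
      (∀ j ≤ k - 1, α (k + 1) j = α k j * β k / (β k - β j)) ∧
      α (k + 1) k = -∑ u ∈ Finset.range k, α k u * β k / (β k - β u))
    (f : ℕ → ℝ → ℝ)
    (hf1 : ∀ t, 0 ≤ t → f 1 t = n * x t * Real.exp (-(n * F t)))
    (hfrec : ∀ k, 1 ≤ k → k ≤ n - 1 → ∀ t, 0 ≤ t →
      f (k + 1) t =
        ((n : ℝ) - (k : ℝ)) * (1 + (k : ℝ) * c) * x t *
          ∫ u in (0 : ℝ)..t,
            f k u * Real.exp (-(((n : ℝ) - (k : ℝ)) * (1 + (k : ℝ) * c) * (F t - F u)))) :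
    ∀ k, 1 ≤ k → k ≤ n → ∀ t, 0 ≤ t →
      f k t = ∑ j ∈ Finset.range k, α k j * x t * Real.exp (-(β j * F t)) := by
  have hFdef : F = fun t => ∫ u in (0 : ℝ)..t, x u := funext hF
  subst hFdef
  -- basic integrability/continuity facts
  have hxint : ∀ t, 0 ≤ t → IntervalIntegrable x volume 0 t := by
    intro t ht
    refine (hxcont.mono ?_).intervalIntegrable
    rw [uIcc_of_le ht]
    exact Icc_subset_Ici_self
  set F : ℝ → ℝ := fun t => ∫ u in (0 : ℝ)..t, x u with hFdef
  have hF0 : F 0 = 0 := intervalIntegral.integral_same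
  have hFcont : ∀ t, 0 ≤ t → ContinuousOn F (uIcc 0 t) := by
    intro t ht
    exact continuousOn_primitive_interval' (hxint t ht) left_mem_uIcc
  have hxcont' : ∀ t, 0 ≤ t → ContinuousOn x (uIcc 0 t) := by
    intro t ht
    refine hxcont.mono ?_
    rw [uIcc_of_le ht]
    exact Icc_subset_Ici_self
  have hFderiv : ∀ u : ℝ, 0 < u → HasDerivAt F (x u) u := by
    intro u hu
    have hc : ContinuousAt x u := hxcont.continuousAt (Ici_mem_nhds hu)
    have hmeas : StronglyMeasurableAtFilter x (𝓝 u) volume :=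
      (hxcont.mono Ioi_subset_Ici_self).stronglyMeasurableAtFilter isOpen_Ioi u hu
    exact intervalIntegral.integral_hasDerivAt_right (hxint u hu.le) hmeas hc
  -- key substitution lemma
  have key : ∀ a : ℝ, a ≠ 0 → ∀ t, 0 ≤ t →
      (∫ u in (0 : ℝ)..t, x u * Real.exp (a * F u))
        = (Real.exp (a * F t) - 1) / a := by
    intro a ha t ht
    have h1 : (∫ u in (0 : ℝ)..t, x u * Real.exp (a * F u))
        = ∫ y in (F 0)..(F t), Real.exp (a * y) := by
      have := intervalIntegral.integral_comp_smul_deriv'' (f := F) (f' := x)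
        (g := fun y => Real.exp (a * y)) (a := (0:ℝ)) (b := t)
        (hFcont t ht)
        (by
          intro u hu
          rw [min_eq_left ht, max_eq_right ht] at hu
          exact (hFderiv u hu.1).hasDerivWithinAt)
        (hxcont' t ht)
        ((Real.continuous_exp.comp (continuous_const.mul continuous_id)).continuousOn)
      simpa [smul_eq_mul, Function.comp] using this
    rw [h1, hF0]
    rw [intervalIntegral.integral_comp_mul_left (fun y => Real.exp y) ha]
    rw [integral_exp]
    rw [mul_zero, Real.exp_zero]
    simp [smul_eq_mul]
    field_simp
  -- nonvanishing of β differences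
  have hβne : ∀ m, 1 ≤ m → m ≤ n - 1 → ∀ j, j < m → β m - β j ≠ 0 := by
    intro m hm1 hmn j hj
    have hjn : j ≤ n - 1 := le_trans (Nat.le_of_lt_succ (Nat.lt_succ_of_lt hj)) hmn
    have hdiff : β m - β j = ((m : ℝ) - j) * (c * ((n : ℝ) - m - j) - 1) := by
      rw [hβ m hmn, hβ j hjn]; ring
    rw [hdiff]
    have hmj : ((m : ℝ) - j) ≠ 0 := by
      have : (j : ℝ) < m := by exact_mod_cast hj
      linarith
    refine mul_ne_zero hmj ?_
    by_cases hcase : n ≤ m + j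
    · have : ((n : ℝ) - m - j) ≤ 0 := by
        have : (n : ℝ) ≤ (m : ℝ) + j := by exact_mod_cast hcase
        linarith
      nlinarith [mul_nonpos_of_nonneg_of_nonpos hc this]
    · push_neg at hcase
      set i : ℕ := n - m - j with hi
      have hi1 : 1 ≤ i := by omega
      have hin : i ≤ n - 1 := by omega
      have hiR : (i : ℝ) = (n : ℝ) - m - j := by
        have h1 : (i : ℕ) + m + j = n := by omega
        have := congrArg (fun k : ℕ => (k : ℝ)) h1
        push_cast at this
        linarith
      have hcnei := hcne i hi1 hin
      intro hcontra
      apply hcnei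
      have hipos : (0 : ℝ) < i := by exact_mod_cast hi1
      have hci : c * (i : ℝ) = 1 := by rw [hiR]; linarith
      rw [eq_div_iff (ne_of_gt hipos)]
      exact hci
  -- main induction
  refine fun k hk => Nat.le_induction ?_ ?_ k hk
  · -- base case k = 1
    intro _ t ht
    rw [hf1 t ht, Finset.sum_range_one]
    have hβ0 : β 0 = (n : ℝ) := by
      rw [hβ 0 (by omega)]; push_cast; ring
    rw [hβ0, hα1]
  · -- inductive step
    intro m hm ih hm1n t ht
    have hmn1 : m ≤ n - 1 := by omega
    have IH := ih (by omega)
    have hβm : β m = ((n : ℝ) - m) * (1 + (m : ℝ) * c) := hβ m hmn1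
    have hne := hβne m hm hmn1
    rw [hfrec m hm hmn1 t ht]
    simp only [← hβm]
    -- compute the integral
    have hI : (∫ u in (0 : ℝ)..t, f m u * Real.exp (-(β m * (F t - F u))))
        = ∑ j ∈ Finset.range m,
            (α m j * Real.exp (-(β m * F t))) *
              ((Real.exp ((β m - β j) * F t) - 1) / (β m - β j)) := by
      have step1 : EqOn (fun u => f m u * Real.exp (-(β m * (F t - F u))))
          (fun u => ∑ j ∈ Finset.range m,
            (α m j * Real.exp (-(β m * F t))) * (x u * Real.exp ((β m - β j) * F u)))
          (uIcc 0 t) := by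
        intro u hu
        rw [uIcc_of_le ht] at hu
        simp only
        rw [IH u hu.1, Finset.sum_mul]
        refine Finset.sum_congr rfl fun j hj => ?_
        have hexp : Real.exp (-(β j * F u)) * Real.exp (-(β m * (F t - F u)))
            = Real.exp (-(β m * F t)) * Real.exp ((β m - β j) * F u) := by
          rw [← Real.exp_add, ← Real.exp_add]; ring_nf
        linear_combination (α m j * x u) * hexp
      rw [intervalIntegral.integral_congr step1]
      rw [intervalIntegral.integral_finset_sum]
      · refine Finset.sum_congr rfl fun j hj => ?_
        rw [intervalIntegral.integral_const_mul,
          key (β m - β j) (hne j (Finset.mem_range.mp hj)) t ht]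
      · intro j hj
        refine ContinuousOn.intervalIntegrable ?_
        exact continuousOn_const.mul ((hxcont' t ht).mul
          (Real.continuous_exp.comp_continuousOn
            (continuousOn_const.mul (hFcont t ht))))
    rw [hI, Finset.sum_range_succ, (hαrec m hm hmn1).2]
    have hα' : ∀ j ∈ Finset.range m,
        α (m + 1) j * x t * Real.exp (-(β j * F t))
          = α m j * β m / (β m - β j) * x t * Real.exp (-(β j * F t)) := by
      intro j hj
      rw [(hαrec m hm hmn1).1 j (by have := Finset.mem_range.mp hj; omega)]
    rw [Finset.sum_congr rfl hα']
    rw [neg_mul, neg_mul, Finset.sum_mul, Finset.sum_mul, ← sub_eq_add_neg,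
      ← Finset.sum_sub_distrib, Finset.mul_sum]
    refine Finset.sum_congr rfl fun j hj => ?_
    have hj' : β m - β j ≠ 0 := hne j (Finset.mem_range.mp hj)
    have hexp : Real.exp (-(β m * F t)) * Real.exp ((β m - β j) * F t)
        = Real.exp (-(β j * F t)) := by
      rw [← Real.exp_add]; ring_nf
    linear_combination (α m j * β m * x t / (β m - β j)) * hexp
end

section
/- Let η₁ > 0, η₂ > 0 and l > 0. Set α = (η₁+η₂+l)/2, β = (η₁+η₂−l)/2 and ω = lη₂ − α². Then ω < 0, the function ψ₁(t) = e^{−αt}[ cosh(√(−ω) t) + (β/√(−ω)) sinh(√(−ω) t) ] is integrable against e^{−st} on (0,∞) for every s ≥ 0, and its Laplace transform satisfies ∫_0^∞ e^{−st} ψ₁(t) dt = (s + η₁ + η₂)/(s² + s(η₁+η₂+l) + lη₂) for every s ≥ 0. -/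
open MeasureTheory Real Set

lemma laplace_exp_aux (c : ℝ) (hc : 0 < c) :
    (∫ t in Ioi (0 : ℝ), Real.exp (-c * t)) = 1 / c := by
  have h := integral_comp_mul_left_Ioi (fun x => Real.exp (-x)) 0 hc
  simp only [mul_zero, integral_exp_neg_Ioi, smul_eq_mul, neg_zero, Real.exp_zero,
    mul_one] at h
  rw [show (fun t : ℝ => Real.exp (-c * t)) = fun t : ℝ => Real.exp (-(c * t)) by
    funext t; ring_nf] at *
  rw [h]; rw [one_div]

/-- In the two-state regime-switching model, with `α = (η₁+η₂+l)/2`, `β = (η₁+η₂-l)/2`,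
`ω = lη₂ - α²`, one has `ω < 0`, the function
`ψ₁(t) = e^{-αt}(cosh(√(-ω) t) + (β/√(-ω)) sinh(√(-ω) t))` is integrable against `e^{-st}`
on `(0,∞)` for every `s ≥ 0`, and its Laplace transform is
`(s+η₁+η₂)/(s² + s(η₁+η₂+l) + lη₂)`. -/
theorem laplace_transform_psi_one
    (η₁ η₂ l : ℝ) (hη₁ : 0 < η₁) (hη₂ : 0 < η₂) (hl : 0 < l)
    (α β ω : ℝ) (hα : α = (η₁ + η₂ + l) / 2) (hβ : β = (η₁ + η₂ - l) / 2)
    (hω : ω = l * η₂ - α ^ 2)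
    (ψ₁ : ℝ → ℝ)
    (hψ₁ : ∀ t, ψ₁ t =
      Real.exp (-α * t) *
        (Real.cosh (Real.sqrt (-ω) * t) + (β / Real.sqrt (-ω)) * Real.sinh (Real.sqrt (-ω) * t))) :
    ω < 0 ∧
      (∀ s : ℝ, 0 ≤ s → IntegrableOn (fun t => Real.exp (-s * t) * ψ₁ t) (Ioi 0)) ∧
      (∀ s : ℝ, 0 ≤ s →
        (∫ t in Ioi (0 : ℝ), Real.exp (-s * t) * ψ₁ t) =
          (s + η₁ + η₂) / (s ^ 2 + s * (η₁ + η₂ + l) + l * η₂)) := by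
  have hωneg : ω < 0 := by nlinarith [sq_nonneg β]
  set r := Real.sqrt (-ω) with hrdef
  have hr : 0 < r := Real.sqrt_pos.mpr (by linarith)
  have hr2 : r ^ 2 = α ^ 2 - l * η₂ := by
    rw [hrdef, Real.sq_sqrt (by linarith : (0:ℝ) ≤ -ω)]; linarith
  have hα0 : 0 < α := by rw [hα]; linarith
  have hrα : r < α := by nlinarith
  have key : ∀ s t : ℝ, Real.exp (-s * t) * ψ₁ t =
      ((1 + β / r) / 2) * Real.exp (-(s + α - r) * t)
        + ((1 - β / r) / 2) * Real.exp (-(s + α + r) * t) := by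
    intro s t
    rw [hψ₁, Real.cosh_eq, Real.sinh_eq,
      show -(s + α - r) * t = -s * t + (-α * t + r * t) by ring,
      show -(s + α + r) * t = -s * t + (-α * t + -(r * t)) by ring,
      Real.exp_add, Real.exp_add, Real.exp_add, Real.exp_add]
    ring
  refine ⟨hωneg, ?_, ?_⟩
  · intro s hs
    have h1 : 0 < s + α - r := by linarith
    have h2 : 0 < s + α + r := by linarith
    have heq : (fun t => Real.exp (-s * t) * ψ₁ t) =
        fun t => ((1 + β / r) / 2) * Real.exp (-(s + α - r) * t)
          + ((1 - β / r) / 2) * Real.exp (-(s + α + r) * t) := funext (key s)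
    rw [IntegrableOn, heq]
    exact ((exp_neg_integrableOn_Ioi 0 h1).const_mul ((1 + β / r) / 2)).add
      ((exp_neg_integrableOn_Ioi 0 h2).const_mul ((1 - β / r) / 2))
  · intro s hs
    have h1 : 0 < s + α - r := by linarith
    have h2 : 0 < s + α + r := by linarith
    rw [setIntegral_congr_fun measurableSet_Ioi (fun t _ => key s t),
      integral_add ((exp_neg_integrableOn_Ioi 0 h1).const_mul _)
        ((exp_neg_integrableOn_Ioi 0 h2).const_mul _),
      integral_const_mul, integral_const_mul, laplace_exp_aux _ h1, laplace_exp_aux _ h2]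
    have hden : s ^ 2 + s * (η₁ + η₂ + l) + l * η₂ ≠ 0 := by nlinarith
    have h1' : s + α - r ≠ 0 := ne_of_gt h1
    have h2' : s + α + r ≠ 0 := ne_of_gt h2
    have hβ' : β = α - l := by rw [hβ, hα]; ring
    have hdfac : s ^ 2 + s * (η₁ + η₂ + l) + l * η₂ = (s + α - r) * (s + α + r) := by
      linear_combination hr2 - 2 * s * hα
    have hnum : s + η₁ + η₂ = s + 2 * α - l := by rw [hα]; ring
    rw [hdfac, hnum, hβ']
    field_simp
    ring
end

section
/- Let η₁ > 0, η₂ > 0 and l > 0. Set α = (η₁+η₂+l)/2, β = (η₁+η₂−l)/2, ω = lη₂ − α² (so ω < 0), and define ψ₁(t) = e^{−αt}[ cosh(√(−ω) t) + (β/√(−ω)) sinh(√(−ω) t) ] and ψ₂(t) = e^{−αt}[ cosh(√(−ω) t) + (α/√(−ω)) sinh(√(−ω) t) ]. Then for every t ≥ 0: ψ₁(t) = ∫_0^t η₁ e^{−(η₁+l)u} ψ₂(t−u) du + e^{−(η₁+l)t} and ψ₂(t) = ∫_0^t η₂ e^{−η₂ u} ψ₁(t−u) du + e^{−η₂ t}.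 -/
open MeasureTheory Real Set intervalIntegral

/-- Key derivative computation: `u ↦ -(e^{-cu} φ_p(t-u))` has derivative
`k e^{-cu} φ_q(t-u)` where `φ_p(s) = e^{-αs}(cosh(γs) + (p/γ) sinh(γs))`,
provided `k = c - α + p` and `k q = (c-α) p + γ²`. -/
lemma deriv_key (α γ c p q k : ℝ) (hγ : γ ≠ 0) (hk : k = c - α + p)
    (hq : k * q = (c - α) * p + γ ^ 2) (t u : ℝ) :
    HasDerivAt (fun u => -(Real.exp (-c * u) *
        (Real.exp (-α * (t - u)) * (Real.cosh (γ * (t - u)) + (p / γ) * Real.sinh (γ * (t - u))))))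
      (k * Real.exp (-c * u) *
        (Real.exp (-α * (t - u)) * (Real.cosh (γ * (t - u)) + (q / γ) * Real.sinh (γ * (t - u))))) u := by
  have h1 : HasDerivAt (fun u : ℝ => Real.exp (-c * u)) (Real.exp (-c * u) * -c) u := by
    simpa using ((hasDerivAt_id u).const_mul (-c)).exp
  have hs : HasDerivAt (fun u : ℝ => t - u) (-1) u := (hasDerivAt_id u).const_sub t
  have h2 : HasDerivAt (fun u : ℝ => Real.exp (-α * (t - u)))
      (Real.exp (-α * (t - u)) * (-α * -1)) u := ((hs.const_mul (-α)).exp)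
  have h3 : HasDerivAt (fun u : ℝ => Real.cosh (γ * (t - u)))
      (Real.sinh (γ * (t - u)) * (γ * -1)) u := (hs.const_mul γ).cosh
  have h4 : HasDerivAt (fun u : ℝ => Real.sinh (γ * (t - u)))
      (Real.cosh (γ * (t - u)) * (γ * -1)) u := (hs.const_mul γ).sinh
  have h5 := (h1.mul (h2.mul (h3.add ((h4.const_mul (p / γ)))))).neg
  refine h5.congr_deriv ?_
  simp only [Pi.mul_apply, Pi.add_apply]
  set E1 := Real.exp (-c * u)
  set E2 := Real.exp (-α * (t - u))
  set C := Real.cosh (γ * (t - u))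
  set S := Real.sinh (γ * (t - u))
  linear_combination (-(E1 * E2 * S) / γ) * hq + (-(E1 * E2 * C)) * hk +
    (E1 * E2 * C * p - E1 * E2 * γ * S) * (mul_inv_cancel₀ hγ)

/-- The closed-form expressions for `ψ₁` and `ψ₂` in the two-state regime-switching model
solve the pair of renewal integral equations obtained by conditioning on the first jump:
`ψ₁(t) = ∫_0^t η₁ e^{-(η₁+l)u} ψ₂(t-u) du + e^{-(η₁+l)t}` and
`ψ₂(t) = ∫_0^t η₂ e^{-η₂ u} ψ₁(t-u) du + e^{-η₂ t}` for all `t ≥ 0`. -/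
theorem psi_solves_renewal_equations
    (η₁ η₂ l : ℝ) (hη₁ : 0 < η₁) (hη₂ : 0 < η₂) (hl : 0 < l)
    (α β ω : ℝ) (hα : α = (η₁ + η₂ + l) / 2) (hβ : β = (η₁ + η₂ - l) / 2)
    (hω : ω = l * η₂ - α ^ 2)
    (ψ₁ ψ₂ : ℝ → ℝ)
    (hψ₁ : ∀ t, ψ₁ t =
      Real.exp (-α * t) *
        (Real.cosh (Real.sqrt (-ω) * t) + (β / Real.sqrt (-ω)) * Real.sinh (Real.sqrt (-ω) * t)))
    (hψ₂ : ∀ t, ψ₂ t =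
      Real.exp (-α * t) *
        (Real.cosh (Real.sqrt (-ω) * t) + (α / Real.sqrt (-ω)) * Real.sinh (Real.sqrt (-ω) * t))) :
    ∀ t, 0 ≤ t →
      (ψ₁ t = (∫ u in (0 : ℝ)..t, η₁ * Real.exp (-(η₁ + l) * u) * ψ₂ (t - u)) +
          Real.exp (-(η₁ + l) * t)) ∧
      (ψ₂ t = (∫ u in (0 : ℝ)..t, η₂ * Real.exp (-η₂ * u) * ψ₁ (t - u)) +
          Real.exp (-η₂ * t)) := by
  intro t ht
  have hωeq : -ω = β ^ 2 + l * η₁ := by rw [hω, hα, hβ]; ring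
  have hpos : 0 < -ω := by rw [hωeq]; nlinarith [sq_nonneg β, mul_pos hl hη₁]
  have hγ : Real.sqrt (-ω) ≠ 0 := (Real.sqrt_pos.mpr hpos).ne'
  have hγ2 : Real.sqrt (-ω) ^ 2 = α ^ 2 - l * η₂ := by
    rw [Real.sq_sqrt hpos.le, hω]; ring
  constructor
  · have hk1 : η₁ = (η₁ + l) - α + β := by rw [hα, hβ]; ring
    have hq1 : η₁ * α = ((η₁ + l) - α) * β + Real.sqrt (-ω) ^ 2 := by
      rw [hγ2, hα, hβ]; ring
    have hFTC := intervalIntegral.integral_eq_sub_of_hasDerivAt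
      (f := fun u => -(Real.exp (-(η₁ + l) * u) *
        (Real.exp (-α * (t - u)) * (Real.cosh (Real.sqrt (-ω) * (t - u)) +
          (β / Real.sqrt (-ω)) * Real.sinh (Real.sqrt (-ω) * (t - u))))))
      (f' := fun u => η₁ * Real.exp (-(η₁ + l) * u) *
        (Real.exp (-α * (t - u)) * (Real.cosh (Real.sqrt (-ω) * (t - u)) +
          (α / Real.sqrt (-ω)) * Real.sinh (Real.sqrt (-ω) * (t - u)))))
      (a := 0) (b := t)
      (fun u _ => deriv_key α (Real.sqrt (-ω)) (η₁ + l) β α η₁ hγ hk1 hq1 t u)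
      (Continuous.intervalIntegrable (by fun_prop) 0 t)
    simp only [hψ₁, hψ₂]
    rw [hFTC]
    simp
  · have hk2 : η₂ = η₂ - α + α := by ring
    have hq2 : η₂ * β = (η₂ - α) * α + Real.sqrt (-ω) ^ 2 := by
      rw [hγ2, hα, hβ]; ring
    have hFTC := intervalIntegral.integral_eq_sub_of_hasDerivAt
      (f := fun u => -(Real.exp (-η₂ * u) *
        (Real.exp (-α * (t - u)) * (Real.cosh (Real.sqrt (-ω) * (t - u)) +
          (α / Real.sqrt (-ω)) * Real.sinh (Real.sqrt (-ω) * (t - u))))))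
      (f' := fun u => η₂ * Real.exp (-η₂ * u) *
        (Real.exp (-α * (t - u)) * (Real.cosh (Real.sqrt (-ω) * (t - u)) +
          (β / Real.sqrt (-ω)) * Real.sinh (Real.sqrt (-ω) * (t - u)))))
      (a := 0) (b := t)
      (fun u _ => deriv_key α (Real.sqrt (-ω)) η₂ α β η₂ hγ hk2 hq2 t u)
      (Continuous.intervalIntegrable (by fun_prop) 0 t)
    simp only [hψ₁, hψ₂]
    rw [hFTC]
    simp
end

section
/- Let n₁, n₂ ≥ 1 be integers, a, ã > 0 and b, c, b̃, c̃ ≥ 0. For integers k, m define ζ_{k,m} = a(n₁−m)(1 + bm + c(k−m)) and ζ̃_{k,m} = ã(n₂−(k−m))(1 + b̃m + c̃(k−m)), and β_{i,j} = ζ_{i,j} + ζ̃_{i,j}. Define functions f_{k,m} on [0,∞) by f_{1,1}(t) = n₁ a e^{−(n₁a+n₂ã)t}, f_{1,0}(t) = n₂ ã e^{−(n₁a+n₂ã)t}, f_{1,m} = 0 for m ∉ {0,1}, and recursively, for 1 ≤ k ≤ n₁+n₂−1: f_{k+1,m+1}(t) = ζ̃_{k,m+1} ∫_0^t f_{k,m+1}(u)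 e^{−β_{k,m+1}(t−u)} du + ζ_{k,m} ∫_0^t f_{k,m}(u) e^{−β_{k,m}(t−u)} du, and f_{k+1,0}(t) = ζ̃_{k,0} ∫_0^t f_{k,0}(u) e^{−β_{k,0}(t−u)} du. Assume β_{k,m} ≠ β_{i,j} whenever 1 ≤ k ≤ n₁+n₂, max{0, k−n₂} ≤ m ≤ min{k, n₁}, 0 ≤ i ≤ k−1 and 0 ≤ j ≤ m with (i,j) ≠ (k,m). Then for all such k and m, f_{k,m}(t) = Σ_{i=0}^{k−1} Σ_{j=0}^{m} α_{k,m,i,j} e^{−β_{i,j} t}, where the coefficients satisfy α_{1,1,0,0} = n₁a, α_{1,0,0,0} = n₂ã, α_{1,1,0,1} = 0, α_{1,m,i,j} = 0 for m ∉ {0,1}, and the recursions: α_{k+1,m+1,i,j} = α_{k,m+1,i,j} ζ̃_{k,m+1}/(β_{k,m+1}−β_{i,j}) + α_{k,m,i,j} ζ_{k,m}/(β_{k,m}−β_{i,j}) for i ≤ k−1, j ≤ m; α_{k+1,m+1,i,m+1} = α_{k,m+1,i,m+1} ζ̃_{k,m+1}/(β_{k,m+1}−β_{i,m+1}) for i ≤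 k−1; α_{k+1,m+1,k,m+1} = −Σ_{u=0}^{k−1} Σ_{v=0}^{m+1} α_{k,m+1,u,v} ζ̃_{k,m+1}/(β_{k,m+1}−β_{u,v}); α_{k+1,m+1,k,m} = −Σ_{u=0}^{k−1} Σ_{v=0}^{m} α_{k,m,u,v} ζ_{k,m}/(β_{k,m}−β_{u,v}); α_{k+1,m+1,i,j} = 0 otherwise; together with α_{k+1,0,i,0} = ζ̃_{k,0} α_{k,0,i,0}/(β_{k,0}−β_{i,0}) for i ≤ k−1 and α_{k+1,0,k,0} = −Σ_{u=0}^{k−1} ζ̃_{k,0} α_{k,0,u,0}/(β_{k,0}−β_{u,0}). -/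
open MeasureTheory Real Finset intervalIntegral

lemma conv_exp (p q t : ℝ) (h : q ≠ p) :
    ∫ u in (0:ℝ)..t, Real.exp (-p*u) * Real.exp (-q*(t-u)) =
      (Real.exp (-p*t) - Real.exp (-q*t)) / (q - p) := by
  have hc : q - p ≠ 0 := sub_ne_zero.mpr h
  have h1 : ∀ u : ℝ, Real.exp (-p*u) * Real.exp (-q*(t-u)) =
      Real.exp (-q*t) * Real.exp ((q-p)*u) := by
    intro u; rw [← Real.exp_add, ← Real.exp_add]; ring_nf
  simp_rw [h1]
  rw [intervalIntegral.integral_const_mul]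
  have hd : ∀ u : ℝ, HasDerivAt (fun x => Real.exp ((q-p)*x) / (q-p)) (Real.exp ((q-p)*u)) u := by
    intro u
    have := ((hasDerivAt_id u).const_mul (q-p)).exp
    simpa [mul_comm, mul_div_assoc, mul_div_cancel_left₀ _ hc] using this.div_const (q-p)
  rw [intervalIntegral.integral_eq_sub_of_hasDerivAt (fun u _ => hd u)
    (by apply Continuous.intervalIntegrable; continuity)]
  have h2 : Real.exp (-q*t) * Real.exp ((q-p)*t) = Real.exp (-p*t) := by
    rw [← Real.exp_add]; ring_nf
  rw [mul_zero, Real.exp_zero]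
  linear_combination h2 / (q-p)

lemma conv_integral (β : ℕ → ℕ → ℝ) (A : ℕ → ℕ → ℝ) (K M : ℕ) (q : ℝ)
    (hne : ∀ i ∈ range K, ∀ j ∈ range M, q ≠ β i j) (t : ℝ) (ht : 0 ≤ t)
    (g : ℝ → ℝ)
    (hg : ∀ u, 0 ≤ u → u ≤ t →
      g u = ∑ i ∈ range K, ∑ j ∈ range M, A i j * Real.exp (-β i j * u)) :
    ∫ u in (0:ℝ)..t, g u * Real.exp (-q * (t-u)) =
      ∑ i ∈ range K, ∑ j ∈ range M,
        A i j * ((Real.exp (-β i j * t) - Real.exp (-q*t))/(q - β i j)) := by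
  rw [intervalIntegral.integral_congr (g := fun u => ∑ i ∈ range K, ∑ j ∈ range M,
      A i j * (Real.exp (-β i j * u) * Real.exp (-q*(t-u))))]
  · rw [intervalIntegral.integral_finset_sum (fun i _ => by
      apply Continuous.intervalIntegrable; fun_prop)]
    refine Finset.sum_congr rfl fun i hi => ?_
    rw [intervalIntegral.integral_finset_sum (fun j _ => by
      apply Continuous.intervalIntegrable; fun_prop)]
    refine Finset.sum_congr rfl fun j hj => ?_
    rw [intervalIntegral.integral_const_mul, conv_exp _ _ _ (hne i hi j hj)]
  · intro u hu
    rw [Set.uIcc_of_le ht] at hu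
    simp only
    rw [hg u hu.1 hu.2, Finset.sum_mul]
    refine Finset.sum_congr rfl fun i _ => ?_
    rw [Finset.sum_mul]
    exact Finset.sum_congr rfl fun j _ => by ring

lemma alg_step (K M : ℕ)
    (A1 A2 B E : ℕ → ℕ → ℝ) (z1 z2 : ℝ) (D1 D2 : ℕ → ℕ → ℝ)
    (c1 : ∀ i < K, ∀ j < M+1, B i j = A1 i j * z1 / D1 i j + A2 i j * z2 / D2 i j)
    (c2 : ∀ i < K, B i (M+1) = A1 i (M+1) * z1 / D1 i (M+1))
    (c3 : B K (M+1) = -∑ u ∈ range K, ∑ v ∈ range (M+2), A1 u v * z1 / D1 u v)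
    (c4 : B K M = -∑ u ∈ range K, ∑ v ∈ range (M+1), A2 u v * z2 / D2 u v)
    (c5 : ∀ j < M, B K j = 0) :
    z1 * (∑ i ∈ range K, ∑ j ∈ range (M+2), A1 i j * ((E i j - E K (M+1)) / D1 i j)) +
      z2 * (∑ i ∈ range K, ∑ j ∈ range (M+1), A2 i j * ((E i j - E K M) / D2 i j)) =
    ∑ i ∈ range (K+1), ∑ j ∈ range (M+2), B i j * E i j := by
  have e1 : z1 * (∑ i ∈ range K, ∑ j ∈ range (M+2), A1 i j * ((E i j - E K (M+1)) / D1 i j)) =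
      (∑ i ∈ range K, ∑ j ∈ range (M+2), (A1 i j * z1 / D1 i j) * E i j)
      - (∑ u ∈ range K, ∑ v ∈ range (M+2), A1 u v * z1 / D1 u v) * E K (M+1) := by
    rw [Finset.mul_sum, Finset.sum_mul, ← Finset.sum_sub_distrib]
    refine Finset.sum_congr rfl fun i _ => ?_
    rw [Finset.mul_sum, Finset.sum_mul, ← Finset.sum_sub_distrib]
    exact Finset.sum_congr rfl fun j _ => by ring
  have e2 : z2 * (∑ i ∈ range K, ∑ j ∈ range (M+1), A2 i j * ((E i j - E K M) / D2 i j)) =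
      (∑ i ∈ range K, ∑ j ∈ range (M+1), (A2 i j * z2 / D2 i j) * E i j)
      - (∑ u ∈ range K, ∑ v ∈ range (M+1), A2 u v * z2 / D2 u v) * E K M := by
    rw [Finset.mul_sum, Finset.sum_mul, ← Finset.sum_sub_distrib]
    refine Finset.sum_congr rfl fun i _ => ?_
    rw [Finset.mul_sum, Finset.sum_mul, ← Finset.sum_sub_distrib]
    exact Finset.sum_congr rfl fun j _ => by ring
  rw [e1, e2, Finset.sum_range_succ]
  have e3 : ∑ j ∈ range (M+2), B K j * E K j =
      B K M * E K M + B K (M+1) * E K (M+1) := by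
    rw [Finset.sum_range_succ, Finset.sum_range_succ]
    have : ∑ j ∈ range M, B K j * E K j = 0 :=
      Finset.sum_eq_zero fun j hj => by rw [c5 j (Finset.mem_range.mp hj)]; ring
    rw [this]; ring
  rw [e3, c3, c4]
  have e4 : ∑ i ∈ range K, ∑ j ∈ range (M+2), B i j * E i j =
      (∑ i ∈ range K, ∑ j ∈ range (M+1), (A1 i j * z1 / D1 i j) * E i j)
      + (∑ i ∈ range K, ∑ j ∈ range (M+1), (A2 i j * z2 / D2 i j) * E i j)
      + ∑ i ∈ range K, (A1 i (M+1) * z1 / D1 i (M+1)) * E i (M+1) := by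
    rw [← Finset.sum_add_distrib, ← Finset.sum_add_distrib]
    refine Finset.sum_congr rfl fun i hi => ?_
    have hiK := Finset.mem_range.mp hi
    rw [Finset.sum_range_succ, c2 i hiK, ← Finset.sum_add_distrib]
    congr 1
    refine Finset.sum_congr rfl fun j hj => ?_
    rw [c1 i hiK j (Finset.mem_range.mp hj)]; ring
  rw [e4]
  have e5 : ∑ i ∈ range K, ∑ j ∈ range (M+2), (A1 i j * z1 / D1 i j) * E i j =
      (∑ i ∈ range K, ∑ j ∈ range (M+1), (A1 i j * z1 / D1 i j) * E i j)
      + ∑ i ∈ range K, (A1 i (M+1) * z1 / D1 i (M+1)) * E i (M+1) := by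
    rw [← Finset.sum_add_distrib]
    exact Finset.sum_congr rfl fun i _ => by rw [Finset.sum_range_succ]
  rw [e5]; ring

lemma alg_step0 (K : ℕ) (A B E D : ℕ → ℝ) (z : ℝ)
    (c1 : ∀ i < K, B i = z * A i / D i)
    (c2 : B K = -∑ u ∈ range K, z * A u / D u) :
    z * (∑ i ∈ range K, A i * ((E i - E K) / D i)) = ∑ i ∈ range (K+1), B i * E i := by
  have key : ∀ i ∈ range K, z * (A i * ((E i - E K) / D i))
      = B i * E i - (z * A i / D i) * E K := fun i hi => by
    rw [c1 i (Finset.mem_range.mp hi)]; ring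
  rw [Finset.mul_sum, Finset.sum_congr rfl key, Finset.sum_sub_distrib,
    Finset.sum_range_succ, c2, neg_mul, Finset.sum_mul]
  ring

/-- Closed-form solution of the joint density recursion in the two-group heterogeneous
contagion model: with `ζ k m = a(n₁-m)(1+bm+c(k-m))`,
`ζ̃ k m = ã(n₂-(k-m))(1+b̃m+c̃(k-m))`, `β i j = ζ i j + ζ̃ i j`, and `f k m` defined by the
stated convolution recursion, one has
`f k m t = Σ_{i<k} Σ_{j≤m} α k m i j e^{-β i j t}` for all admissible `(k, m)`,
where the coefficients `α` satisfy the stated recursions. -/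
theorem heterogeneous_joint_density_closed_form
    (n₁ n₂ : ℕ) (hn₁ : 1 ≤ n₁) (hn₂ : 1 ≤ n₂)
    (a at' b c bt ct : ℝ) (ha : 0 < a) (hat : 0 < at')
    (hb : 0 ≤ b) (hc : 0 ≤ c) (hbt : 0 ≤ bt) (hct : 0 ≤ ct)
    (ζ ζt β : ℕ → ℕ → ℝ)
    (hζ : ∀ k m, ζ k m = a * ((n₁ : ℝ) - (m : ℝ)) * (1 + b * (m : ℝ) + c * ((k : ℝ) - (m : ℝ))))
    (hζt : ∀ k m, ζt k m =
      at' * ((n₂ : ℝ) - ((k : ℝ) - (m : ℝ))) * (1 + bt * (m : ℝ) + ct * ((k : ℝ) - (m : ℝ))))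
    (hβ : ∀ k m, β k m = ζ k m + ζt k m)
    (f : ℕ → ℕ → ℝ → ℝ)
    (hf11 : ∀ t, 0 ≤ t → f 1 1 t = (n₁ : ℝ) * a * Real.exp (-((n₁ : ℝ) * a + (n₂ : ℝ) * at') * t))
    (hf10 : ∀ t, 0 ≤ t → f 1 0 t = (n₂ : ℝ) * at' * Real.exp (-((n₁ : ℝ) * a + (n₂ : ℝ) * at') * t))
    (hf1m : ∀ m, m ≠ 0 → m ≠ 1 → ∀ t, 0 ≤ t → f 1 m t = 0)
    (hfrec : ∀ k, 1 ≤ k → k ≤ n₁ + n₂ - 1 → ∀ m, ∀ t, 0 ≤ t →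
      f (k + 1) (m + 1) t =
        ζt k (m + 1) * (∫ u in (0 : ℝ)..t, f k (m + 1) u * Real.exp (-β k (m + 1) * (t - u))) +
          ζ k m * (∫ u in (0 : ℝ)..t, f k m u * Real.exp (-β k m * (t - u))))
    (hfrec0 : ∀ k, 1 ≤ k → k ≤ n₁ + n₂ - 1 → ∀ t, 0 ≤ t →
      f (k + 1) 0 t = ζt k 0 * ∫ u in (0 : ℝ)..t, f k 0 u * Real.exp (-β k 0 * (t - u)))
    (hdistinct : ∀ k m i j : ℕ, 1 ≤ k → k ≤ n₁ + n₂ →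
      max 0 (k - n₂) ≤ m → m ≤ min k n₁ → i ≤ k - 1 → j ≤ m → (i, j) ≠ (k, m) →
      β k m ≠ β i j)
    (α : ℕ → ℕ → ℕ → ℕ → ℝ)
    (hα110 : α 1 1 0 0 = (n₁ : ℝ) * a)
    (hα100 : α 1 0 0 0 = (n₂ : ℝ) * at')
    (hα1101 : α 1 1 0 1 = 0)
    (hα1m : ∀ m, m ≠ 0 → m ≠ 1 → ∀ i j, α 1 m i j = 0)
    (hαrec : ∀ k, 1 ≤ k → k ≤ n₁ + n₂ - 1 → ∀ m,
      (∀ i j, i ≤ k - 1 → j ≤ m →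
        α (k + 1) (m + 1) i j =
          α k (m + 1) i j * ζt k (m + 1) / (β k (m + 1) - β i j) +
            α k m i j * ζ k m / (β k m - β i j)) ∧
      (∀ i, i ≤ k - 1 →
        α (k + 1) (m + 1) i (m + 1) =
          α k (m + 1) i (m + 1) * ζt k (m + 1) / (β k (m + 1) - β i (m + 1))) ∧
      (α (k + 1) (m + 1) k (m + 1) =
        -∑ u ∈ Finset.range k, ∑ v ∈ Finset.range (m + 2),
          α k (m + 1) u v * ζt k (m + 1) / (β k (m + 1) - β u v)) ∧
      (α (k + 1) (m + 1) k m =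
        -∑ u ∈ Finset.range k, ∑ v ∈ Finset.range (m + 1),
          α k m u v * ζ k m / (β k m - β u v)) ∧
      (∀ i j, ¬(i ≤ k - 1 ∧ j ≤ m) → ¬(i ≤ k - 1 ∧ j = m + 1) →
        ¬(i = k ∧ j = m + 1) → ¬(i = k ∧ j = m) → α (k + 1) (m + 1) i j = 0))
    (hαrec0 : ∀ k, 1 ≤ k → k ≤ n₁ + n₂ - 1 →
      (∀ i, i ≤ k - 1 → α (k + 1) 0 i 0 = ζt k 0 * α k 0 i 0 / (β k 0 - β i 0)) ∧
      (α (k + 1) 0 k 0 = -∑ u ∈ Finset.range k, ζt k 0 * α k 0 u 0 / (β k 0 - β u 0))) :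
    ∀ k m : ℕ, 1 ≤ k → k ≤ n₁ + n₂ → max 0 (k - n₂) ≤ m → m ≤ min k n₁ →
      ∀ t, 0 ≤ t →
        f k m t =
          ∑ i ∈ Finset.range k, ∑ j ∈ Finset.range (m + 1),
            α k m i j * Real.exp (-β i j * t) := by
  have hβ00 : β 0 0 = (n₁ : ℝ) * a + (n₂ : ℝ) * at' := by
    rw [hβ, hζ, hζt]; push_cast; ring
  -- α vanishes above the diagonal
  have αzero : ∀ k, 1 ≤ k → k ≤ n₁ + n₂ → ∀ m, k < m → ∀ i j, α k m i j = 0 := by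
    intro k
    induction k with
    | zero => omega
    | succ k ih =>
      intro hk1 hk2 m hm i j
      rcases Nat.eq_zero_or_pos k with rfl | hk
      · exact hα1m m (by omega) (by omega) i j
      · obtain ⟨m', rfl⟩ : ∃ m', m = m' + 1 := ⟨m - 1, by omega⟩
        obtain ⟨c1, c2, c3, c4, c5⟩ := hαrec k hk (by omega) m'
        have ihz : ∀ m'', k < m'' → ∀ i j, α k m'' i j = 0 :=
          fun m'' h => ih hk (by omega) m'' h
        by_cases h1 : i ≤ k - 1 ∧ j ≤ m'
        · rw [c1 i j h1.1 h1.2, ihz (m'+1) (by omega) i j, ihz m' (by omega) i j]; ring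
        · by_cases h2 : i ≤ k - 1 ∧ j = m' + 1
          · obtain ⟨hi, rfl⟩ := h2
            rw [c2 i hi, ihz (m'+1) (by omega) i (m'+1)]; ring
          · by_cases h3 : i = k ∧ j = m' + 1
            · rw [h3.1, h3.2, c3, neg_eq_zero]
              refine Finset.sum_eq_zero fun u _ => Finset.sum_eq_zero fun v _ => ?_
              rw [ihz (m'+1) (by omega) u v]; ring
            · by_cases h4 : i = k ∧ j = m'
              · rw [h4.1, h4.2, c4, neg_eq_zero]
                refine Finset.sum_eq_zero fun u _ => Finset.sum_eq_zero fun v _ => ?_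
                rw [ihz m' (by omega) u v]; ring
              · exact c5 i j h1 h2 h3 h4
  -- f vanishes above the diagonal
  have fzero : ∀ k, 1 ≤ k → k ≤ n₁ + n₂ → ∀ m, k < m → ∀ t, 0 ≤ t → f k m t = 0 := by
    intro k
    induction k with
    | zero => omega
    | succ k ih =>
      intro hk1 hk2 m hm t ht
      rcases Nat.eq_zero_or_pos k with rfl | hk
      · exact hf1m m (by omega) (by omega) t ht
      · obtain ⟨m', rfl⟩ : ∃ m', m = m' + 1 := ⟨m - 1, by omega⟩
        rw [hfrec k hk (by omega) m' t ht]
        have hz : ∀ m'', k < m'' →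
            (∫ u in (0:ℝ)..t, f k m'' u * Real.exp (-β k m'' * (t - u))) = 0 := by
          intro m'' h
          rw [intervalIntegral.integral_congr (g := fun _ => (0:ℝ))]
          · simp
          · intro u hu
            rw [Set.uIcc_of_le ht] at hu
            simp only
            rw [ih hk (by omega) m'' h u hu.1]; ring
        rw [hz (m'+1) (by omega), hz m' (by omega)]; ring
  intro k
  induction k with
  | zero => exact fun m h => absurd h (by omega)
  | succ k ih =>
    intro m hk1 hk2 hm1 hm2 t ht
    rcases Nat.eq_zero_or_pos k with rfl | hk
    · -- base case k = 1
      have hm : m ≤ 1 := le_trans hm2 (min_le_left _ _)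
      interval_cases m
      · have hs : ∑ i ∈ range 1, ∑ j ∈ range (0+1), α 1 0 i j * Real.exp (-β i j * t)
            = α 1 0 0 0 * Real.exp (-β 0 0 * t) := by simp
        rw [hs, hf10 t ht, hα100, hβ00]
      · have hs : ∑ i ∈ range 1, ∑ j ∈ range (1+1), α 1 1 i j * Real.exp (-β i j * t)
            = α 1 1 0 0 * Real.exp (-β 0 0 * t) + α 1 1 0 1 * Real.exp (-β 0 1 * t) := by
          simp [Finset.sum_range_succ]
        rw [hs, hf11 t ht, hα110, hα1101, hβ00]; ring
    · -- inductive step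
      have hk2' : k ≤ n₁ + n₂ := by omega
      have hkr : k ≤ n₁ + n₂ - 1 := by omega
      rcases Nat.eq_zero_or_pos m with rfl | hm
      · -- m = 0 case
        have hkn₂ : k + 1 ≤ n₂ := by omega
        obtain ⟨c1, c2⟩ := hαrec0 k hk hkr
        rw [hfrec0 k hk hkr t ht]
        have hne : ∀ i ∈ range k, ∀ j ∈ range 1, β k 0 ≠ β i j := by
          intro i hi j hj
          rw [Finset.mem_range] at hi hj
          refine hdistinct k 0 i j hk hk2' (by omega) (by omega) (by omega) (by omega) ?_
          intro hP; rw [Prod.mk.injEq] at hP; omega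
        rw [conv_integral β (α k 0) k 1 (β k 0) hne t ht (f k 0)
          (fun u hu0 hut => ih 0 hk hk2' (by omega) (by omega) u hu0)]
        simp only [Nat.reduceAdd, Finset.sum_range_one]
        exact alg_step0 k (fun i => α k 0 i 0) (fun i => α (k+1) 0 i 0)
          (fun i => Real.exp (-β i 0 * t)) (fun i => β k 0 - β i 0) (ζt k 0)
          (fun i hi => c1 i (by omega)) c2
      · -- m = m' + 1 case
        obtain ⟨m', rfl⟩ : ∃ m', m = m' + 1 := ⟨m - 1, by omega⟩
        obtain ⟨c1, c2, c3, c4, c5⟩ := hαrec k hk hkr m'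
        have hm'lo : max 0 (k - n₂) ≤ m' := by omega
        have hm'hi : m' ≤ min k n₁ := by omega
        rw [hfrec k hk hkr m' t ht]
        have hne2 : ∀ i ∈ range k, ∀ j ∈ range (m'+1), β k m' ≠ β i j := by
          intro i hi j hj
          rw [Finset.mem_range] at hi hj
          refine hdistinct k m' i j hk hk2' hm'lo hm'hi (by omega) (by omega) ?_
          intro hP; rw [Prod.mk.injEq] at hP; omega
        have hI2 := conv_integral β (α k m') k (m'+1) (β k m') hne2 t ht (f k m')
          (fun u hu0 hut => ih m' hk hk2' hm'lo hm'hi u hu0)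
        have hI1 : (∫ u in (0:ℝ)..t, f k (m'+1) u * Real.exp (-β k (m'+1) * (t - u))) =
            ∑ i ∈ range k, ∑ j ∈ range (m'+2),
              α k (m'+1) i j *
                ((Real.exp (-β i j * t) - Real.exp (-β k (m'+1) * t)) / (β k (m'+1) - β i j)) := by
          by_cases hcase : m' + 1 ≤ k
          · have hlo : max 0 (k - n₂) ≤ m' + 1 := by omega
            have hhi : m' + 1 ≤ min k n₁ := by omega
            have hne1 : ∀ i ∈ range k, ∀ j ∈ range (m'+2), β k (m'+1) ≠ β i j := by
              intro i hi j hj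
              rw [Finset.mem_range] at hi hj
              refine hdistinct k (m'+1) i j hk hk2' hlo hhi (by omega) (by omega) ?_
              intro hP; rw [Prod.mk.injEq] at hP; omega
            exact conv_integral β (α k (m'+1)) k (m'+2) (β k (m'+1)) hne1 t ht (f k (m'+1))
              (fun u hu0 hut => ih (m'+1) hk hk2' hlo hhi u hu0)
          · have hgt : k < m' + 1 := by omega
            rw [intervalIntegral.integral_congr (g := fun _ => (0:ℝ))]
            · rw [intervalIntegral.integral_zero]
              symm
              refine Finset.sum_eq_zero fun i _ => Finset.sum_eq_zero fun j _ => ?_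
              rw [αzero k hk hk2' (m'+1) hgt i j]; ring
            · intro u hu
              rw [Set.uIcc_of_le ht] at hu
              simp only
              rw [fzero k hk hk2' (m'+1) hgt u hu.1]; ring
        rw [hI1, hI2]
        exact alg_step k m' (α k (m'+1)) (α k m') (α (k+1) (m'+1))
          (fun i j => Real.exp (-β i j * t)) (ζt k (m'+1)) (ζ k m')
          (fun i j => β k (m'+1) - β i j) (fun i j => β k m' - β i j)
          (fun i hi j hj => c1 i j (by omega) (by omega))
          (fun i hi => c2 i (by omega)) c3 c4
          (fun j hj => c5 k j (by omega) (by omega) (by omega) (by omega))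
end
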